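/- arXiv:2001.02189 — 7 statements merged into one kernel-verified Lean document; each statement's English description precedes it below -/
import Mathlib

section
/- Let G be a finite simple graph on n(G) vertices. If G is connected, then the general position number of the complementary prism G\bar{G} satisfies gp(G\bar{G}) ≤ n(G) + 1. -/
open SimpleGraph

variable {V : Type*}

/-- `v` lies on a geodesic (shortest path) between `u` and `w` in `G`. -/
def liesOnGeodesic (G : SimpleGraph V) (u v w : V) : Prop :=
  G.Reachable u w ∧ G.dist u v + G.dist v w = G.dist u w

/-- `S` is a general position set in `G`: no element of `S` lies on a geodesic
between two other elements of `S`. -/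
def isGenPosSet (G : SimpleGraph V) (S : Set V) : Prop :=
  ∀ u ∈ S, ∀ v ∈ S, ∀ w ∈ S, u ≠ v → v ≠ w → u ≠ w → ¬ liesOnGeodesic G u v w

/-- The general position number `gp(G)` of `G`. -/
noncomputable def gpNum (G : SimpleGraph V) : ℕ :=
  sSup {n : ℕ | ∃ S : Set V, isGenPosSet G S ∧ S.ncard = n}

/-- `S` is a `3`-general position set in `G`: no three vertices of `S` lie on a
common geodesic of length at most `3`. -/
def isGP3Set (G : SimpleGraph V) (S : Set V) : Prop :=
  ∀ u ∈ S, ∀ v ∈ S, ∀ w ∈ S, u ≠ v → v ≠ w → u ≠ w →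
    ¬ (liesOnGeodesic G u v w ∧ G.dist u w ≤ 3)

/-- The `3`-general position number `gp₃(G)` of `G`. -/
noncomputable def gp3Num (G : SimpleGraph V) : ℕ :=
  sSup {n : ℕ | ∃ S : Set V, isGP3Set G S ∧ S.ncard = n}

/-- The complementary prism `G\bar{G}`: the disjoint union of `G` (left copy) and
its complement `Gᶜ` (right copy), together with the perfect matching joining each
vertex to its copy. -/
def compPrism (G : SimpleGraph V) : SimpleGraph (V ⊕ V) where
  Adj x y :=
    match x, y with
    | Sum.inl a, Sum.inl b => G.Adj a b
    | Sum.inr a, Sum.inr b => Gᶜ.Adj a b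
    | Sum.inl a, Sum.inr b => a = b
    | Sum.inr a, Sum.inl b => a = b
  symm := by
    constructor
    rintro (a | a) (b | b) h
    · exact (G.adj_comm a b).mp h
    · exact Eq.symm h
    · exact Eq.symm h
    · exact (Gᶜ.adj_comm a b).mp h
  loopless := by
    constructor
    rintro (a | a) h
    · exact G.loopless.irrefl a h
    · exact Gᶜ.loopless.irrefl a h

/-- The eccentricity of a vertex: the maximum distance to another vertex. -/
noncomputable def ecc (G : SimpleGraph V) (v : V) : ℕ :=
  sSup (Set.range (G.dist v))

/-- The radius of a graph: the minimum eccentricity. -/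
noncomputable def rad (G : SimpleGraph V) : ℕ :=
  sInf (Set.range (ecc G))

/-- The diameter of a graph: the maximum distance between two vertices. -/
noncomputable def graphDiam (G : SimpleGraph V) : ℕ :=
  sSup {n : ℕ | ∃ u v : V, G.dist u v = n}

/-- `\bar{gp}₃(G)`: the maximum, over all `gp₃`-sets `S` of `G`, of the `3`-general
position number of the subgraph of `Gᶜ` induced by the vertices outside `S`. -/
noncomputable def barGp3 (G : SimpleGraph V) : ℕ :=
  sSup {n : ℕ | ∃ S : Set V, isGP3Set G S ∧ S.ncard = gp3Num G ∧
          gp3Num ((Gᶜ).induce Sᶜ) = n}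

/-- A cut vertex: its removal disconnects the graph. -/
def isCutVertex (G : SimpleGraph V) (v : V) : Prop :=
  ¬ (G.induce {u : V | u ≠ v}).Connected

/-- `B` is the vertex set of a `2`-connected subgraph of `G`:
it has at least `3` vertices and removing any one vertex leaves it connected. -/
def isTwoConnectedSet (G : SimpleGraph V) (B : Set V) : Prop :=
  3 ≤ B.ncard ∧ ∀ v ∈ B, (G.induce (B \ {v})).Connected

/-- A block graph: every maximal `2`-connected subgraph is a clique. -/
def isBlockGraph (G : SimpleGraph V) : Prop :=
  ∀ B : Set V, isTwoConnectedSet G B →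
    (∀ B' : Set V, isTwoConnectedSet G B' → B ⊆ B' → B = B') →
    G.IsClique B

/-- Complete multipartite graph: the vertices can be partitioned (via an
equivalence relation, whose classes are the parts) so that two vertices are
adjacent iff they lie in different parts. -/
def isCompleteMultipartite (G : SimpleGraph V) : Prop :=
  ∃ r : V → V → Prop, Equivalence r ∧ ∀ u v, G.Adj u v ↔ ¬ r u v

/-- The hypercube `Q_n`: binary strings of length `n`, two strings being
adjacent when they differ in exactly one coordinate. -/
def hypercube (n : ℕ) : SimpleGraph (Fin n → Bool) where
  Adj x y := {i : Fin n | x i ≠ y i}.ncard = 1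
  symm := by
    constructor
    intro x y h
    simpa [ne_comm] using h
  loopless := by
    constructor
    intro x
    simp

/-- The block graph `G_k`: a chain of `k+1` triangles `{vᵢ, uᵢ, vᵢ₊₁}`,
with the `v`-vertices `v₁, …, v_{k+2}` indexed by `Fin (k+2)` (left summand)
and the `u`-vertices `u₁, …, u_{k+1}` indexed by `Fin (k+1)` (right summand);
the edges are `vᵢvᵢ₊₁`, `uᵢvᵢ` and `uᵢvᵢ₊₁`. -/
def Gk (k : ℕ) : SimpleGraph (Fin (k + 2) ⊕ Fin (k + 1)) where
  Adj x y :=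
    match x, y with
    | Sum.inl a, Sum.inl b => a.val + 1 = b.val ∨ b.val + 1 = a.val
    | Sum.inl a, Sum.inr b => a.val = b.val ∨ a.val = b.val + 1
    | Sum.inr a, Sum.inl b => b.val = a.val ∨ b.val = a.val + 1
    | Sum.inr _, Sum.inr _ => False
  symm := by
    constructor
    rintro (a | a) (b | b) h
    · exact Or.symm h
    · exact h
    · exact h
    · exact h
  loopless := by
    constructor
    rintro (a | a) h
    · omega
    · exact h


lemma compPrism_dist_inl_inr {V : Type*} (G : SimpleGraph V) {u w : V} (h : u ≠ w) :
    (compPrism G).Reachable (Sum.inl u) (Sum.inr w) ∧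
      (compPrism G).dist (Sum.inl u) (Sum.inr w) = 2 := by
  have hwalk : ∃ p : (compPrism G).Walk (Sum.inl u) (Sum.inr w), p.length = 2 := by
    by_cases hadj : G.Adj u w
    · exact ⟨Walk.cons (show (compPrism G).Adj (Sum.inl u) (Sum.inl w) from hadj)
        (Walk.cons (show (compPrism G).Adj (Sum.inl w) (Sum.inr w) from rfl) Walk.nil), rfl⟩
    · exact ⟨Walk.cons (show (compPrism G).Adj (Sum.inl u) (Sum.inr u) from rfl)
        (Walk.cons (show (compPrism G).Adj (Sum.inr u) (Sum.inr w) from ⟨h, hadj⟩)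
          Walk.nil), rfl⟩
  obtain ⟨p, hp⟩ := hwalk
  have hreach : (compPrism G).Reachable (Sum.inl u) (Sum.inr w) := p.reachable
  refine ⟨hreach, ?_⟩
  have hle : (compPrism G).dist (Sum.inl u) (Sum.inr w) ≤ 2 := hp ▸ SimpleGraph.dist_le p
  have hpos : 0 < (compPrism G).dist (Sum.inl u) (Sum.inr w) :=
    hreach.pos_dist_of_ne (by simp)
  have hne1 : (compPrism G).dist (Sum.inl u) (Sum.inr w) ≠ 1 := by
    intro h1
    have : (compPrism G).Adj (Sum.inl u) (Sum.inr w) := SimpleGraph.dist_eq_one_iff_adj.mp h1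
    exact h this
  omega

/-- If `G` is connected, then `gp(G\bar{G}) ≤ n(G) + 1`. -/
theorem gp_compPrism_le_of_connected {V : Type*} [Fintype V] (G : SimpleGraph V)
    (hG : G.Connected) :
    gpNum (compPrism G) ≤ Fintype.card V + 1 := by
  apply csSup_le'
  rintro n ⟨S, hS, rfl⟩
  classical
  set A : Set V := Sum.inl ⁻¹' S with hA
  set B : Set V := Sum.inr ⁻¹' S with hB
  -- at most one vertex has both copies in S
  have hsub : ∀ u ∈ A ∩ B, ∀ w ∈ A ∩ B, u = w := by
    rintro u ⟨hu1, hu2⟩ w ⟨hw1, hw2⟩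
    by_contra huw
    obtain ⟨hr, hd⟩ := compPrism_dist_inl_inr G huw
    by_cases hadj : G.Adj u w
    · refine hS (Sum.inl u) hu1 (Sum.inl w) hw1 (Sum.inr w) hw2
        (by simp [huw]) (by simp) (by simp) ⟨hr, ?_⟩
      have h1 : (compPrism G).dist (Sum.inl u) (Sum.inl w) = 1 :=
        SimpleGraph.dist_eq_one_iff_adj.mpr hadj
      have h2 : (compPrism G).dist (Sum.inl w) (Sum.inr w) = 1 :=
        SimpleGraph.dist_eq_one_iff_adj.mpr rfl
      omega
    · refine hS (Sum.inl u) hu1 (Sum.inr u) hu2 (Sum.inr w) hw2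
        (by simp) (by simp [huw]) (by simp) ⟨hr, ?_⟩
      have h1 : (compPrism G).dist (Sum.inl u) (Sum.inr u) = 1 :=
        SimpleGraph.dist_eq_one_iff_adj.mpr rfl
      have h2 : (compPrism G).dist (Sum.inr u) (Sum.inr w) = 1 :=
        SimpleGraph.dist_eq_one_iff_adj.mpr ⟨huw, hadj⟩
      omega
  have hABone : (A ∩ B).ncard ≤ 1 := (Set.ncard_le_one (Set.toFinite _)).mpr hsub
  -- decompose S
  have hSeq : S = (Sum.inl '' A) ∪ (Sum.inr '' B) := by
    ext x
    cases x with
    | inl a => simp [hA]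
    | inr b => simp [hB]
  have hdisj : Disjoint (Sum.inl '' A : Set (V ⊕ V)) (Sum.inr '' B) := by
    rw [Set.disjoint_left]
    rintro x ⟨a, _, rfl⟩ ⟨b, _, h⟩
    exact Sum.inl_ne_inr h.symm
  have hcardS : S.ncard = A.ncard + B.ncard := by
    rw [hSeq, Set.ncard_union_eq hdisj (Set.toFinite _) (Set.toFinite _),
      Set.ncard_image_of_injective _ Sum.inl_injective,
      Set.ncard_image_of_injective _ Sum.inr_injective]
  have hkey : A.ncard + B.ncard = (A ∪ B).ncard + (A ∩ B).ncard :=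
    (Set.ncard_union_add_ncard_inter A B (Set.toFinite _) (Set.toFinite _)).symm
  have hUle : (A ∪ B).ncard ≤ Fintype.card V := by
    have := Set.ncard_le_ncard (Set.subset_univ (A ∪ B)) (Set.toFinite _)
    simpa [Set.ncard_univ] using this
  omega
end

section
/- Let G be a finite simple graph on n(G) vertices. If G is disconnected, then the general position number of the complementary prism G\bar{G} satisfies gp(G\bar{G}) ≤ n(G). -/
open SimpleGraph

variable {V : Type*}

section AuxCompPrism

variable {V : Type*} {G : SimpleGraph V}

lemma compPrism_adj_inl_inr (a b : V) :
    (compPrism G).Adj (Sum.inl a) (Sum.inr b) ↔ a = b := Iff.rfl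

lemma compPrism_adj_inl_inl (a b : V) :
    (compPrism G).Adj (Sum.inl a) (Sum.inl b) ↔ G.Adj a b := Iff.rfl

lemma compPrism_adj_inr_inr {a b : V} (hab : a ≠ b) (h : ¬ G.Adj a b) :
    (compPrism G).Adj (Sum.inr a) (Sum.inr b) := by
  show Gᶜ.Adj a b
  rw [SimpleGraph.compl_adj]
  exact ⟨hab, h⟩

lemma dist_inl_inr_self (a : V) :
    (compPrism G).dist (Sum.inl a) (Sum.inr a) = 1 :=
  SimpleGraph.dist_eq_one_iff_adj.mpr rfl

/-- A walk of length 2 from `inl a` to `inr b` when `a ≠ b`. -/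
noncomputable def walkInlInr {a b : V} (hab : a ≠ b) :
    (compPrism G).Walk (Sum.inl a) (Sum.inr b) := by
  by_cases h : G.Adj a b
  · exact Walk.cons (show (compPrism G).Adj (Sum.inl a) (Sum.inl b) from h)
      (Walk.cons (show (compPrism G).Adj (Sum.inl b) (Sum.inr b) from rfl) Walk.nil)
  · exact Walk.cons (show (compPrism G).Adj (Sum.inl a) (Sum.inr a) from rfl)
      (Walk.cons (compPrism_adj_inr_inr hab h) Walk.nil)

lemma walkInlInr_length {a b : V} (hab : a ≠ b) :
    (walkInlInr (G := G) hab).length = 2 := by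
  unfold walkInlInr
  by_cases h : G.Adj a b <;> simp [h]

lemma dist_inl_inr {a b : V} (hab : a ≠ b) :
    (compPrism G).dist (Sum.inl a) (Sum.inr b) = 2 := by
  have hub : (compPrism G).dist (Sum.inl a) (Sum.inr b) ≤ 2 := by
    have := SimpleGraph.dist_le (walkInlInr (G := G) hab)
    rwa [walkInlInr_length hab] at this
  have h0 : (compPrism G).dist (Sum.inl a) (Sum.inr b) ≠ 0 :=
    SimpleGraph.dist_ne_zero_iff_ne_and_reachable.mpr ⟨by simp, ⟨walkInlInr hab⟩⟩
  have h1 : (compPrism G).dist (Sum.inl a) (Sum.inr b) ≠ 1 := by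
    intro h
    exact hab ((compPrism_adj_inl_inr a b).mp (SimpleGraph.dist_eq_one_iff_adj.mp h))
  omega

lemma dist_inr_inr {a b : V} (hab : a ≠ b) (h : ¬ G.Adj a b) :
    (compPrism G).dist (Sum.inr a) (Sum.inr b) = 1 :=
  SimpleGraph.dist_eq_one_iff_adj.mpr (compPrism_adj_inr_inr hab h)

lemma reachable_inl_inl {a b : V} : (compPrism G).Reachable (Sum.inl a) (Sum.inl b) := by
  by_cases hab : a = b
  · subst hab; rfl
  by_cases h : G.Adj a b
  · exact (show (compPrism G).Adj (Sum.inl a) (Sum.inl b) from h).reachable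
  · exact Walk.reachable (Walk.cons (show (compPrism G).Adj (Sum.inl a) (Sum.inr a) from rfl)
      (Walk.cons (compPrism_adj_inr_inr hab h)
        (Walk.cons (show (compPrism G).Adj (Sum.inr b) (Sum.inl b) from rfl) Walk.nil)))

/-- For nonadjacent distinct `a v`, either they have a common neighbour in `G`,
or their left copies are at distance `3` in the complementary prism. -/
lemma common_nbr_or_dist_three {a v : V} (hav : a ≠ v) (hadj : ¬ G.Adj a v) :
    (∃ c, G.Adj a c ∧ G.Adj c v) ∨
      (compPrism G).dist (Sum.inl a) (Sum.inl v) = 3 := by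
  by_cases hc : ∃ c, G.Adj a c ∧ G.Adj c v
  · exact Or.inl hc
  right
  obtain ⟨p, hp3⟩ : ∃ p : (compPrism G).Walk (Sum.inl a) (Sum.inl v), p.length = 3 :=
    ⟨Walk.cons (show (compPrism G).Adj (Sum.inl a) (Sum.inr a) from rfl)
      (Walk.cons (compPrism_adj_inr_inr hav hadj)
        (Walk.cons (show (compPrism G).Adj (Sum.inr v) (Sum.inl v) from rfl) Walk.nil)), by simp⟩
  have hub : (compPrism G).dist (Sum.inl a) (Sum.inl v) ≤ 3 := hp3 ▸ SimpleGraph.dist_le p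
  have h0 : (compPrism G).dist (Sum.inl a) (Sum.inl v) ≠ 0 :=
    SimpleGraph.dist_ne_zero_iff_ne_and_reachable.mpr ⟨by simp [hav], ⟨p⟩⟩
  have h1 : (compPrism G).dist (Sum.inl a) (Sum.inl v) ≠ 1 := by
    intro h
    exact hadj ((compPrism_adj_inl_inl a v).mp (SimpleGraph.dist_eq_one_iff_adj.mp h))
  have h2 : (compPrism G).dist (Sum.inl a) (Sum.inl v) ≠ 2 := by
    intro h
    obtain ⟨q, hq⟩ := SimpleGraph.exists_walk_of_dist_ne_zero h0
    rw [h] at hq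
    have had1 : (compPrism G).Adj (Sum.inl a) (q.getVert 1) := by
      have := q.adj_getVert_succ (i := 0) (by omega)
      simpa using this
    have had2 : (compPrism G).Adj (q.getVert 1) (Sum.inl v) := by
      have := q.adj_getVert_succ (i := 1) (by omega)
      have hend : q.getVert 2 = Sum.inl v := by
        have := q.getVert_length
        rwa [hq] at this
      rw [hend] at this
      exact this
    cases hm : q.getVert 1 with
    | inl c =>
        rw [hm] at had1 had2
        exact absurd ⟨c, had1, had2⟩ hc
    | inr c =>
        rw [hm] at had1 had2
        have h1' : a = c := had1
        have h2' : c = v := had2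
        exact absurd (h1'.trans h2') hav
  omega

end AuxCompPrism

/-- If `G` is disconnected, then `gp(G\bar{G}) ≤ n(G)`. -/
theorem gp_compPrism_le_of_disconnected {V : Type*} [Fintype V] (G : SimpleGraph V)
    (hG : ¬ G.Connected) :
    gpNum (compPrism G) ≤ Fintype.card V := by
  refine csSup_le ⟨0, ∅, fun u hu => (Set.notMem_empty u hu).elim, Set.ncard_empty _⟩ ?_
  rintro m ⟨S, hS, rfl⟩
  set SL : Set V := Sum.inl ⁻¹' S with hSLdef
  set SR : Set V := Sum.inr ⁻¹' S with hSRdef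
  have hSdecomp : S = Sum.inl '' SL ∪ Sum.inr '' SR := by
    ext x; cases x <;> simp [hSLdef, hSRdef]
  have hdisj : Disjoint (Sum.inl '' SL : Set (V ⊕ V)) (Sum.inr '' SR) := by
    rw [Set.disjoint_left]
    rintro x ⟨a, -, rfl⟩ ⟨b, -, h⟩
    exact Sum.inl_ne_inr h.symm
  have hcard : S.ncard = SL.ncard + SR.ncard := by
    rw [hSdecomp, Set.ncard_union_eq hdisj, Set.ncard_image_of_injective _ Sum.inl_injective,
      Set.ncard_image_of_injective _ Sum.inr_injective]
  have huniv : (SL ∪ SR).ncard ≤ Fintype.card V := by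
    have h := Set.ncard_le_ncard (Set.subset_univ (SL ∪ SR)) Set.finite_univ
    rwa [Set.ncard_univ, Nat.card_eq_fintype_card] at h
  have hie := Set.ncard_union_add_ncard_inter SL SR
  by_cases hinter : SL ∩ SR = ∅
  · rw [hinter, Set.ncard_empty] at hie
    omega
  · obtain ⟨v, hvL, hvR⟩ : ∃ v, v ∈ SL ∧ v ∈ SR := by
      obtain ⟨v, hv⟩ := Set.nonempty_iff_ne_empty.mpr hinter
      exact ⟨v, hv.1, hv.2⟩
    have hvL' : Sum.inl v ∈ S := hvL
    have hvR' : Sum.inr v ∈ S := hvR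
    -- every other right vertex of S is adjacent to v
    have hRadj : ∀ b, Sum.inr b ∈ S → b ≠ v → G.Adj b v := by
      intro b hb hbv
      by_contra h
      refine hS _ hb _ hvR' _ hvL'
        (fun he => hbv (Sum.inr_injective he)) (by simp) (by simp) ?_
      refine ⟨Walk.reachable (Walk.cons (compPrism_adj_inr_inr hbv h)
        (Walk.cons (show (compPrism G).Adj (Sum.inr v) (Sum.inl v) from rfl) Walk.nil)), ?_⟩
      have d1 := dist_inr_inr hbv h (G := G)
      have d2 : (compPrism G).dist (Sum.inr v) (Sum.inl v) = 1 := by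
        rw [SimpleGraph.dist_comm]; exact dist_inl_inr_self v
      have d3 : (compPrism G).dist (Sum.inr b) (Sum.inl v) = 2 := by
        rw [SimpleGraph.dist_comm]; exact dist_inl_inr (Ne.symm hbv)
      rw [d1, d2, d3]
    -- every other left vertex of S is nonadjacent to v
    have hLnadj : ∀ a, Sum.inl a ∈ S → a ≠ v → ¬ G.Adj a v := by
      intro a ha hav h
      refine hS _ ha _ hvL' _ hvR'
        (fun he => hav (Sum.inl_injective he)) (by simp) (by simp) ?_
      refine ⟨⟨walkInlInr hav⟩, ?_⟩
      have d1 : (compPrism G).dist (Sum.inl a) (Sum.inl v) = 1 :=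
        SimpleGraph.dist_eq_one_iff_adj.mpr h
      have d2 := dist_inl_inr_self v (G := G)
      have d3 := dist_inl_inr hav (G := G)
      rw [d1, d2, d3]
    -- every other left vertex of S has a common neighbour with v
    have hLcom : ∀ a, Sum.inl a ∈ S → a ≠ v → ∃ c, G.Adj a c ∧ G.Adj c v := by
      intro a ha hav
      rcases common_nbr_or_dist_three hav (hLnadj a ha hav) with h | h
      · exact h
      exfalso
      refine hS _ ha _ hvR' _ hvL'
        (by simp) (by simp) (fun he => hav (Sum.inl_injective he)) ?_
      refine ⟨reachable_inl_inl, ?_⟩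
      have d1 := dist_inl_inr hav (G := G)
      have d2 : (compPrism G).dist (Sum.inr v) (Sum.inl v) = 1 := by
        rw [SimpleGraph.dist_comm]; exact dist_inl_inr_self v
      rw [d1, d2, h]
    -- the intersection is exactly {v}
    have hTsub : SL ∩ SR ⊆ {v} := by
      rintro u ⟨huL, huR⟩
      by_contra huv
      simp only [Set.mem_singleton_iff] at huv
      exact hLnadj u huL huv (hRadj u huR huv)
    -- all of SL ∪ SR lies in the component of v
    have hC : SL ∪ SR ⊆ {u | G.Reachable v u} := by
      rintro u (hu | hu)
      · by_cases huv : u = v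
        · subst huv; exact SimpleGraph.Reachable.refl u
        · obtain ⟨c, h1, h2⟩ := hLcom u hu huv
          exact (h2.symm.reachable).trans (h1.symm.reachable)
      · by_cases huv : u = v
        · subst huv; exact SimpleGraph.Reachable.refl u
        · exact ((hRadj u hu huv).symm).reachable
    -- some vertex is not reachable from v
    have hproper : ∃ w, ¬ G.Reachable v w := by
      rw [SimpleGraph.connected_iff] at hG
      have hnp : ¬ G.Preconnected := fun hp => hG ⟨hp, ⟨v⟩⟩
      unfold SimpleGraph.Preconnected at hnp
      push_neg at hnp
      obtain ⟨x, y, hxy⟩ := hnp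
      by_cases hvx : G.Reachable v x
      · exact ⟨y, fun hvy => hxy (hvx.symm.trans hvy)⟩
      · exact ⟨x, hvx⟩
    have hlt : (SL ∪ SR).ncard < Fintype.card V := by
      obtain ⟨w, hw⟩ := hproper
      have hss : SL ∪ SR ⊂ Set.univ :=
        ⟨Set.subset_univ _, fun h => hw (hC (h (Set.mem_univ w)))⟩
      have h := Set.ncard_lt_ncard hss Set.finite_univ
      rwa [Set.ncard_univ, Nat.card_eq_fintype_card] at h
    have hint : (SL ∩ SR).ncard ≤ 1 := by
      have h := Set.ncard_le_ncard hTsub (Set.finite_singleton v)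
      rwa [Set.ncard_singleton] at h
    omega
end

section
/- Let G be a finite simple graph with n(G) ≥ 2 such that both G and its complement \bar{G} are connected. If gp(G\bar{G}) = n(G) + 1, then the radius of G equals 2. -/
open SimpleGraph

variable {V : Type*}

section Aux

open SimpleGraph

variable {W : Type*}

lemma myAdj_of_dist_eq_one {G : SimpleGraph W} {u v : W} (h : G.dist u v = 1) : G.Adj u v :=
  SimpleGraph.dist_eq_one_iff_adj.mp h

lemma myExists_mid_of_dist_eq_two {G : SimpleGraph W} {u v : W} (h : G.dist u v = 2) :
    ∃ m, G.Adj u m ∧ G.Adj m v := by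
  have hr : G.Reachable u v := SimpleGraph.Reachable.of_dist_ne_zero (by omega)
  obtain ⟨p, hp⟩ := hr.exists_walk_length_eq_dist
  rw [h] at hp
  cases p with
  | nil => simp at hp
  | cons h1 q =>
    cases q with
    | nil => simp at hp
    | cons h2 r =>
      cases r with
      | nil => exact ⟨_, h1, h2⟩
      | cons h3 s => simp [SimpleGraph.Walk.length_cons] at hp

variable {G : SimpleGraph W} {x y : W}

lemma myDist_inl_inr_self (x : W) :
    (compPrism G).dist (Sum.inl x) (Sum.inr x) = 1 :=
  SimpleGraph.dist_eq_one_iff_adj.mpr rfl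

lemma myDist_inl_inr_of_ne (hxy : x ≠ y) :
    (compPrism G).dist (Sum.inl x) (Sum.inr y) = 2 := by
  have hw : ∃ w : (compPrism G).Walk (Sum.inl x) (Sum.inr y), w.length = 2 := by
    by_cases hadj : G.Adj x y
    · exact ⟨Walk.cons (show (compPrism G).Adj (Sum.inl x) (Sum.inl y) from hadj)
        (Walk.cons (show (compPrism G).Adj (Sum.inl y) (Sum.inr y) from rfl) Walk.nil), rfl⟩
    · exact ⟨Walk.cons (show (compPrism G).Adj (Sum.inl x) (Sum.inr x) from rfl)
        (Walk.cons (show (compPrism G).Adj (Sum.inr x) (Sum.inr y) from ⟨hxy, hadj⟩)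
          Walk.nil), rfl⟩
  obtain ⟨w, hwl⟩ := hw
  have hle : (compPrism G).dist (Sum.inl x) (Sum.inr y) ≤ 2 := hwl ▸ SimpleGraph.dist_le w
  have h0 : (compPrism G).dist (Sum.inl x) (Sum.inr y) ≠ 0 := by
    intro h
    rcases SimpleGraph.dist_eq_zero_iff_eq_or_not_reachable.mp h with heq | hnr
    · exact Sum.inl_ne_inr heq
    · exact hnr ⟨w⟩
  have h1 : (compPrism G).dist (Sum.inl x) (Sum.inr y) ≠ 1 := by
    intro h
    exact hxy (myAdj_of_dist_eq_one h)
  omega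

lemma myDist_inr_inl_of_ne (hxy : x ≠ y) :
    (compPrism G).dist (Sum.inr x) (Sum.inl y) = 2 := by
  rw [SimpleGraph.dist_comm]
  exact myDist_inl_inr_of_ne (Ne.symm hxy)

lemma myDist_inl_inl_eq_three (hne : x ≠ y) (hnadj : ¬ G.Adj x y)
    (hmid : ∀ m, ¬ (G.Adj x m ∧ G.Adj m y)) :
    (compPrism G).dist (Sum.inl x) (Sum.inl y) = 3 := by
  obtain ⟨w, hwl⟩ : ∃ w : (compPrism G).Walk (Sum.inl x) (Sum.inl y), w.length = 3 :=
    ⟨Walk.cons (show (compPrism G).Adj (Sum.inl x) (Sum.inr x) from rfl)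
      (Walk.cons (show (compPrism G).Adj (Sum.inr x) (Sum.inr y) from ⟨hne, hnadj⟩)
        (Walk.cons (show (compPrism G).Adj (Sum.inr y) (Sum.inl y) from rfl) Walk.nil)), rfl⟩
  have hle : (compPrism G).dist (Sum.inl x) (Sum.inl y) ≤ 3 := hwl ▸ SimpleGraph.dist_le w
  have h0 : (compPrism G).dist (Sum.inl x) (Sum.inl y) ≠ 0 := by
    intro h
    rcases SimpleGraph.dist_eq_zero_iff_eq_or_not_reachable.mp h with heq | hnr
    · exact hne (Sum.inl_injective heq)
    · exact hnr ⟨w⟩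
  have h1 : (compPrism G).dist (Sum.inl x) (Sum.inl y) ≠ 1 := by
    intro h
    exact hnadj (myAdj_of_dist_eq_one (G := compPrism G) h)
  have h2 : (compPrism G).dist (Sum.inl x) (Sum.inl y) ≠ 2 := by
    intro h
    obtain ⟨m, hm1, hm2⟩ := myExists_mid_of_dist_eq_two h
    cases m with
    | inl m => exact hmid m ⟨hm1, hm2⟩
    | inr m =>
      have h1 : x = m := hm1
      have h2 : m = y := hm2
      exact hne (h1.trans h2)
  omega

end Aux
/-- If `n(G) ≥ 2`, both `G` and `Gᶜ` are connected and `gp(G\bar{G}) = n(G) + 1`,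
then `rad(G) = 2`. -/
theorem radius_eq_two_of_gp_compPrism_eq {V : Type*} [Fintype V] (G : SimpleGraph V)
    (hn : 2 ≤ Fintype.card V) (hG : G.Connected) (hGc : Gᶜ.Connected)
    (hgp : gpNum (compPrism G) = Fintype.card V + 1) :
    rad G = 2 := by
  classical
  have hVne : Nonempty V := Fintype.card_pos_iff.mp (by omega)
  -- extract a maximum general position set
  set T : Set ℕ :=
    {n : ℕ | ∃ S : Set (V ⊕ V), isGenPosSet (compPrism G) S ∧ S.ncard = n} with hTdef
  have hT0 : (0 : ℕ) ∈ T := ⟨∅, by intro u hu; simp at hu, by simp⟩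
  have hTbdd : BddAbove T := by
    refine ⟨Fintype.card (V ⊕ V), ?_⟩
    rintro k ⟨S, _, rfl⟩
    calc S.ncard ≤ (Set.univ : Set (V ⊕ V)).ncard :=
          Set.ncard_le_ncard (Set.subset_univ S) Set.finite_univ
      _ = Fintype.card (V ⊕ V) := by rw [Set.ncard_univ, Nat.card_eq_fintype_card]
  have hmem : sSup T ∈ T := Nat.sSup_mem ⟨0, hT0⟩ hTbdd
  have hT : Fintype.card V + 1 ∈ T := by
    rwa [show sSup T = gpNum (compPrism G) from rfl, hgp] at hmem
  obtain ⟨S, hS, hcard⟩ := hT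
  set A : Set V := Sum.inl ⁻¹' S with hAdef
  set B : Set V := Sum.inr ⁻¹' S with hBdef
  have hSdecomp : S = Sum.inl '' A ∪ Sum.inr '' B := by
    ext s
    cases s with
    | inl a => simp [hAdef]
    | inr b => simp [hBdef]
  have hcardAB : A.ncard + B.ncard = Fintype.card V + 1 := by
    rw [← hcard, hSdecomp, Set.ncard_union_eq ?_ (Set.toFinite _) (Set.toFinite _),
      Set.ncard_image_of_injective _ Sum.inl_injective,
      Set.ncard_image_of_injective _ Sum.inr_injective]
    rw [Set.disjoint_left]
    rintro s ⟨a, _, rfl⟩ ⟨b, _, h⟩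
    exact Sum.inl_ne_inr h.symm
  have hinter : (A ∩ B).ncard + (A ∪ B).ncard = Fintype.card V + 1 := by
    rw [Set.ncard_inter_add_ncard_union A B (Set.toFinite _) (Set.toFinite _)]
    exact hcardAB
  have hUnionLe : (A ∪ B).ncard ≤ Fintype.card V := by
    calc (A ∪ B).ncard ≤ (Set.univ : Set V).ncard :=
          Set.ncard_le_ncard (Set.subset_univ _) Set.finite_univ
      _ = Fintype.card V := by rw [Set.ncard_univ, Nat.card_eq_fintype_card]
  have hABne : (A ∩ B).Nonempty := by
    rw [Set.nonempty_iff_ne_empty]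
    intro h
    rw [h, Set.ncard_empty] at hinter
    omega
  obtain ⟨x, hxA, hxB⟩ := hABne
  have hxA' : Sum.inl x ∈ S := hxA
  have hxB' : Sum.inr x ∈ S := hxB
  -- x is adjacent to no other vertex of A
  have hA : ∀ y ∈ A, y ≠ x → ¬ G.Adj x y := by
    intro y hy hyx hadj
    refine hS (Sum.inr x) hxB' (Sum.inl x) hxA' (Sum.inl y) hy
      (by simp) (by simp [Ne.symm hyx]) (by simp) ?_
    constructor
    · exact ⟨Walk.cons (show (compPrism G).Adj (Sum.inr x) (Sum.inl x) from rfl)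
        (Walk.cons (show (compPrism G).Adj (Sum.inl x) (Sum.inl y) from hadj) Walk.nil)⟩
    · rw [SimpleGraph.dist_comm (u := Sum.inr x), myDist_inl_inr_self,
        SimpleGraph.dist_eq_one_iff_adj.mpr
          (show (compPrism G).Adj (Sum.inl x) (Sum.inl y) from hadj),
        myDist_inr_inl_of_ne (Ne.symm hyx)]
  -- x is adjacent to every other vertex of B
  have hB : ∀ z ∈ B, z ≠ x → G.Adj x z := by
    intro z hz hzx
    by_contra hnadj
    refine hS (Sum.inl x) hxA' (Sum.inr x) hxB' (Sum.inr z) hz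
      (by simp) (by simp [Ne.symm hzx]) (by simp) ?_
    constructor
    · exact ⟨Walk.cons (show (compPrism G).Adj (Sum.inl x) (Sum.inr x) from rfl)
        (Walk.cons (show (compPrism G).Adj (Sum.inr x) (Sum.inr z) from
          ⟨Ne.symm hzx, hnadj⟩) Walk.nil)⟩
    · rw [myDist_inl_inr_self,
        SimpleGraph.dist_eq_one_iff_adj.mpr
          (show (compPrism G).Adj (Sum.inr x) (Sum.inr z) from ⟨Ne.symm hzx, hnadj⟩),
        myDist_inl_inr_of_ne (Ne.symm hzx)]
  -- A ∩ B = {x}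
  have hABsub : A ∩ B ⊆ {x} := by
    rintro y ⟨hyA, hyB⟩
    by_contra hy
    exact hA y hyA hy (hB y hyB hy)
  have hABcard : (A ∩ B).ncard = 1 := by
    refine le_antisymm ?_ ?_
    · calc (A ∩ B).ncard ≤ ({x} : Set V).ncard :=
          Set.ncard_le_ncard hABsub (Set.toFinite _)
        _ = 1 := Set.ncard_singleton x
    · exact (Set.ncard_pos (Set.toFinite _)).mpr ⟨x, hxA, hxB⟩
  have hUnion : A ∪ B = Set.univ :=
    Set.eq_of_subset_of_ncard_le (Set.subset_univ _)
      (by rw [Set.ncard_univ, Nat.card_eq_fintype_card]; omega)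
  -- radius at least 2
  have hrad_ge : 2 ≤ rad G := by
    apply le_csInf (Set.range_nonempty _)
    rintro b ⟨v, rfl⟩
    obtain ⟨u, hu⟩ := Fintype.exists_ne_of_one_lt_card (by omega) v
    obtain ⟨p⟩ := hGc.preconnected v u
    cases p with
    | nil => exact absurd rfl hu
    | @cons _ b _ h q =>
      have hvb : v ≠ b := h.1
      have hnadj : ¬ G.Adj v b := h.2
      have hd0 : 0 < G.dist v b := hG.pos_dist_of_ne hvb
      have hd1 : G.dist v b ≠ 1 := fun hh => hnadj (myAdj_of_dist_eq_one hh)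
      have hdle : G.dist v b ≤ ecc G v :=
        le_csSup (Set.Finite.bddAbove (Set.finite_range _)) ⟨b, rfl⟩
      omega
  -- radius at most 2
  have hrad_le : rad G ≤ 2 := by
    by_contra hlt
    push_neg at hlt
    have hecc : 3 ≤ ecc G x := le_trans hlt (Nat.sInf_le ⟨x, rfl⟩)
    have hmem2 : ecc G x ∈ Set.range (G.dist x) :=
      Nat.sSup_mem ⟨G.dist x x, x, rfl⟩ (Set.Finite.bddAbove (Set.finite_range _))
    obtain ⟨w, hw⟩ := hmem2
    have hdist3 : 3 ≤ G.dist x w := hw ▸ hecc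
    have hxw : x ≠ w := by
      intro h; rw [h, SimpleGraph.dist_self] at hdist3; omega
    have hnadj : ¬ G.Adj x w := by
      intro hadj
      have : G.dist x w ≤ 1 := by
        simpa using SimpleGraph.dist_le (Walk.cons hadj Walk.nil)
      omega
    have hmid : ∀ m, ¬ (G.Adj x m ∧ G.Adj m w) := by
      rintro m ⟨h1, h2⟩
      have : G.dist x w ≤ 2 := by
        simpa using SimpleGraph.dist_le (Walk.cons h1 (Walk.cons h2 Walk.nil))
      omega
    have hwA : w ∈ A := by
      have : w ∈ A ∪ B := hUnion ▸ Set.mem_univ w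
      rcases this with h | h
      · exact h
      · exact absurd (hB w h (Ne.symm hxw)) hnadj
    refine hS (Sum.inl x) hxA' (Sum.inr x) hxB' (Sum.inl w) hwA
      (by simp) (by simp) (by simp [hxw]) ?_
    constructor
    · exact ⟨Walk.cons (show (compPrism G).Adj (Sum.inl x) (Sum.inr x) from rfl)
        (Walk.cons (show (compPrism G).Adj (Sum.inr x) (Sum.inr w) from ⟨hxw, hnadj⟩)
          (Walk.cons (show (compPrism G).Adj (Sum.inr w) (Sum.inl w) from rfl) Walk.nil))⟩
    · rw [myDist_inl_inr_self, myDist_inr_inl_of_ne hxw,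
        myDist_inl_inl_eq_three hxw hnadj hmid]
  omega
end

section
/- Let G be a finite simple graph with n(G) ≥ 2 such that both G and its complement \bar{G} are connected, and suppose gp(G\bar{G}) = n(G) + 1. Then for every general position set S of G\bar{G} of cardinality n(G) + 1 there exists a vertex v of G with eccentricity equal to the radius of G such that v ∈ S, S ∩ V(G) = {u ∈ V(G) : d_G(u,v) = 2} ∪ {v}, and S ∩ V(\bar{G}) is exactly the set of copies \bar{u} of the vertices u in the closed neighborhood N_G[v]. -/
open SimpleGraph

variable {V : Type*}

namespace CPAux

open SimpleGraph Sum

variable {V : Type*} {G : SimpleGraph V} {a b : V}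

lemma adj_ll : (compPrism G).Adj (inl a) (inl b) ↔ G.Adj a b := Iff.rfl
lemma adj_rr : (compPrism G).Adj (inr a) (inr b) ↔ Gᶜ.Adj a b := Iff.rfl
lemma adj_lr : (compPrism G).Adj (inl a) (inr b) ↔ a = b := Iff.rfl
lemma adj_rl : (compPrism G).Adj (inr a) (inl b) ↔ a = b := Iff.rfl

lemma dist_lr_self (G : SimpleGraph V) (a : V) :
    (compPrism G).dist (inl a) (inr a) = 1 :=
  SimpleGraph.dist_eq_one_iff_adj.mpr (adj_lr.mpr rfl)

lemma walk_lr (h : a ≠ b) : ∃ p : (compPrism G).Walk (inl a) (inr b), p.length = 2 := by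
  by_cases hadj : G.Adj a b
  · exact ⟨.cons (adj_ll.mpr hadj) (.cons (adj_lr.mpr rfl) .nil), rfl⟩
  · exact ⟨.cons (adj_lr.mpr rfl) (.cons (adj_rr.mpr ⟨h, hadj⟩) .nil), rfl⟩

lemma dist_lr (h : a ≠ b) : (compPrism G).dist (inl a) (inr b) = 2 := by
  obtain ⟨p, hp⟩ := walk_lr (G := G) h
  have hle : (compPrism G).dist (inl a) (inr b) ≤ 2 := hp ▸ SimpleGraph.dist_le p
  have h0 : (compPrism G).dist (inl a) (inr b) ≠ 0 := fun h0 => by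
    have := (SimpleGraph.Reachable.dist_eq_zero_iff ⟨p⟩).mp h0
    simp at this
  have h1 : (compPrism G).dist (inl a) (inr b) ≠ 1 := fun h1 =>
    h (adj_lr.mp (SimpleGraph.dist_eq_one_iff_adj.mp h1))
  omega

lemma dist_ll_adj (h : G.Adj a b) : (compPrism G).dist (inl a) (inl b) = 1 :=
  SimpleGraph.dist_eq_one_iff_adj.mpr (adj_ll.mpr h)

lemma dist_rr_adj (h : Gᶜ.Adj a b) : (compPrism G).dist (inr a) (inr b) = 1 :=
  SimpleGraph.dist_eq_one_iff_adj.mpr (adj_rr.mpr h)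

lemma dist_ll_three (h : 3 ≤ G.dist a b) : (compPrism G).dist (inl a) (inl b) = 3 := by
  have hab : a ≠ b := by rintro rfl; simp [SimpleGraph.dist_self] at h
  have hnadj : ¬ G.Adj a b := fun h' => by
    have := SimpleGraph.dist_eq_one_iff_adj.mpr h'; omega
  have hcadj : Gᶜ.Adj a b := ⟨hab, hnadj⟩
  set p : (compPrism G).Walk (inl a) (inl b) :=
    .cons (adj_lr.mpr rfl) (.cons (adj_rr.mpr hcadj) (.cons (adj_rl.mpr rfl) .nil)) with hpdef
  have hle : (compPrism G).dist (inl a) (inl b) ≤ 3 := by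
    have := SimpleGraph.dist_le p
    simpa [hpdef] using this
  have h0 : (compPrism G).dist (inl a) (inl b) ≠ 0 := fun h0 => by
    have := (SimpleGraph.Reachable.dist_eq_zero_iff ⟨p⟩).mp h0
    simp only [inl.injEq] at this
    exact hab this
  have h1 : (compPrism G).dist (inl a) (inl b) ≠ 1 := fun h1 =>
    hnadj (adj_ll.mp (SimpleGraph.dist_eq_one_iff_adj.mp h1))
  have h2 : (compPrism G).dist (inl a) (inl b) ≠ 2 := by
    intro h2
    obtain ⟨q, hq⟩ := SimpleGraph.exists_walk_of_dist_ne_zero h0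
    rw [h2] at hq
    cases q with
    | nil => simp at hq
    | cons hadj q' =>
      cases q' with
      | nil => simp at hq
      | cons hadj' q'' =>
        rename_i x y
        simp only [SimpleGraph.Walk.length_cons] at hq
        have hy : y = inl b := SimpleGraph.Walk.eq_of_length_eq_zero (p := q'') (by omega)
        subst hy
        cases x with
        | inl w =>
          have : G.dist a b ≤ 2 := by
            simpa using
              SimpleGraph.dist_le (SimpleGraph.Walk.cons (adj_ll.mp hadj)
                (SimpleGraph.Walk.cons (adj_ll.mp hadj') SimpleGraph.Walk.nil))
          omega
        | inr w =>
          exact hab ((adj_lr.mp hadj).trans (adj_rl.mp hadj'))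
  omega

lemma dist_rl (h : a ≠ b) : (compPrism G).dist (inr a) (inl b) = 2 := by
  rw [SimpleGraph.dist_comm]
  exact dist_lr (Ne.symm h)

lemma dist_rl_self (G : SimpleGraph V) (a : V) :
    (compPrism G).dist (inr a) (inl a) = 1 := by
  rw [SimpleGraph.dist_comm]; exact dist_lr_self G a

end CPAux

/-- If `n(G) ≥ 2`, both `G` and `Gᶜ` are connected and `gp(G\bar{G}) = n(G) + 1`,
then every general position set `S` of `G\bar{G}` of cardinality `n(G) + 1` contains
a `G`-central vertex `v` with `S ∩ V(G) = {u : d_G(u,v) = 2} ∪ {v}` and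
`S ∩ V(Gᶜ)` equal to the copy of the closed neighbourhood `N_G[v]`. -/
theorem gpSet_structure_of_gp_compPrism_eq {V : Type*} [Fintype V] (G : SimpleGraph V)
    (hn : 2 ≤ Fintype.card V) (hG : G.Connected) (hGc : Gᶜ.Connected)
    (hgp : gpNum (compPrism G) = Fintype.card V + 1) :
    ∀ S : Set (V ⊕ V), isGenPosSet (compPrism G) S → S.ncard = Fintype.card V + 1 →
      ∃ v : V, ecc G v = rad G ∧ Sum.inl v ∈ S ∧
        {u : V | Sum.inl u ∈ S} = {u : V | G.dist u v = 2} ∪ {v} ∧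
        {u : V | Sum.inr u ∈ S} = G.neighborSet v ∪ {v} := by
  intro S hS hcard
  classical
  set A : Set V := {u | Sum.inl u ∈ S} with hAdef
  set B : Set V := {u | Sum.inr u ∈ S} with hBdef
  have hSplit : S = Sum.inl '' A ∪ Sum.inr '' B := by
    ext x
    cases x with
    | inl a => simp [hAdef]
    | inr a => simp [hBdef]
  have hdis : Disjoint (Sum.inl '' A : Set (V ⊕ V)) (Sum.inr '' B) := by
    rw [Set.disjoint_left]
    rintro _ ⟨a, _, rfl⟩ ⟨b, _, hb⟩
    simp at hb
  have hcards : S.ncard = A.ncard + B.ncard := by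
    rw [hSplit, Set.ncard_union_eq hdis (Set.toFinite _) (Set.toFinite _),
      Set.ncard_image_of_injective _ Sum.inl_injective,
      Set.ncard_image_of_injective _ Sum.inr_injective]
  have hUle : (A ∪ B).ncard ≤ Fintype.card V := by
    have := Set.ncard_le_ncard (Set.subset_univ (A ∪ B)) Set.finite_univ
    simpa [Set.ncard_univ, Nat.card_eq_fintype_card] using this
  have hsum := Set.ncard_union_add_ncard_inter A B (Set.toFinite _) (Set.toFinite _)
  have hABne : (A ∩ B).Nonempty := by
    rw [← Set.ncard_pos (Set.toFinite _)]
    omega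
  obtain ⟨v, hv⟩ := hABne
  have hvA : v ∈ A := hv.1
  have hvB : v ∈ B := hv.2
  -- Rule 1A: no vertex of A \ {v} is G-adjacent to v
  have rule1A : ∀ u ∈ A, u ≠ v → ¬ G.Adj u v := by
    intro u huA hne hadj
    refine hS (Sum.inr v) hvB (Sum.inl v) hvA (Sum.inl u) huA (by simp)
      (by simpa using hne.symm) (by simp) ?_
    refine ⟨⟨SimpleGraph.Walk.cons (CPAux.adj_rl.mpr rfl)
      (SimpleGraph.Walk.cons (CPAux.adj_ll.mpr hadj.symm) SimpleGraph.Walk.nil)⟩, ?_⟩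
    rw [CPAux.dist_rl_self, CPAux.dist_ll_adj hadj.symm, CPAux.dist_rl hne.symm]
  -- Rule 2: every vertex of A is within distance 2 of v
  have rule2 : ∀ u ∈ A, u ≠ v → G.dist u v ≤ 2 := by
    intro u huA hne
    by_contra hgt
    push_neg at hgt
    have h3 : 3 ≤ G.dist u v := hgt
    refine hS (Sum.inl u) huA (Sum.inr v) hvB (Sum.inl v) hvA (by simp) (by simp)
      (by simpa using hne) ?_
    refine ⟨SimpleGraph.Reachable.of_dist_ne_zero
      (by rw [CPAux.dist_ll_three h3]; omega), ?_⟩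
    rw [CPAux.dist_lr hne, CPAux.dist_rl_self, CPAux.dist_ll_three h3]
  -- Rule 1B: every vertex of B \ {v} is G-adjacent to v
  have rule1B : ∀ u ∈ B, u ≠ v → G.Adj v u := by
    intro u huB hne
    by_contra hadj
    have hc : Gᶜ.Adj v u := ⟨hne.symm, hadj⟩
    refine hS (Sum.inl v) hvA (Sum.inr v) hvB (Sum.inr u) huB (by simp)
      (by simpa using hne.symm) (by simp) ?_
    refine ⟨⟨SimpleGraph.Walk.cons (CPAux.adj_lr.mpr rfl)
      (SimpleGraph.Walk.cons (CPAux.adj_rr.mpr hc) SimpleGraph.Walk.nil)⟩, ?_⟩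
    rw [CPAux.dist_lr_self, CPAux.dist_rr_adj hc, CPAux.dist_lr hne.symm]
  have hABsing : A ∩ B = {v} := by
    apply Set.eq_singleton_iff_unique_mem.mpr
    refine ⟨hv, ?_⟩
    intro u hu
    by_contra hne
    exact rule1A u hu.1 hne (rule1B u hu.2 hne).symm
  have hsingcard : (A ∩ B).ncard = 1 := by rw [hABsing]; exact Set.ncard_singleton v
  have hUcard : (A ∪ B).ncard = Fintype.card V := by omega
  have hUuniv : A ∪ B = Set.univ :=
    Set.eq_of_subset_of_ncard_le (Set.subset_univ _)
      (by rw [Set.ncard_univ, Nat.card_eq_fintype_card, hUcard]) Set.finite_univ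
  have hA2 : ∀ u ∈ A, u ≠ v → G.dist u v = 2 := by
    intro u hu hne
    have h0 : G.dist u v ≠ 0 := fun h0 => hne (hG.dist_eq_zero_iff.mp h0)
    have h1 : G.dist u v ≠ 1 := fun h1 =>
      rule1A u hu hne (SimpleGraph.dist_eq_one_iff_adj.mp h1)
    have := rule2 u hu hne
    omega
  have hAeq : A = {u | G.dist u v = 2} ∪ {v} := by
    ext u
    constructor
    · intro hu
      by_cases hne : u = v
      · exact Or.inr hne
      · exact Or.inl (hA2 u hu hne)
    · rintro (hu | hu)
      · have hu2 : G.dist u v = 2 := hu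
        have hne : u ≠ v := by
          rintro rfl
          rw [SimpleGraph.dist_self] at hu2
          omega
        have huniv : u ∈ A ∪ B := hUuniv ▸ Set.mem_univ u
        rcases huniv with h | h
        · exact h
        · have : G.dist u v = 1 :=
            SimpleGraph.dist_eq_one_iff_adj.mpr (rule1B u h hne).symm
          omega
      · have : u = v := hu
        exact this ▸ hvA
  have hBeq : B = G.neighborSet v ∪ {v} := by
    ext u
    constructor
    · intro hu
      by_cases hne : u = v
      · exact Or.inr hne
      · exact Or.inl (rule1B u hu hne)
    · rintro (hu | hu)
      · have hadj : G.Adj v u := hu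
        have hne : u ≠ v := hadj.ne'
        have huniv : u ∈ A ∪ B := hUuniv ▸ Set.mem_univ u
        rcases huniv with h | h
        · exact absurd hadj.symm (rule1A u h hne)
        · exact h
      · have : u = v := hu
        exact this ▸ hvB
  have hle2 : ∀ u, G.dist v u ≤ 2 := by
    intro u
    rw [SimpleGraph.dist_comm]
    by_cases hne : u = v
    · subst hne; simp [SimpleGraph.dist_self]
    · have huniv : u ∈ A ∪ B := hUuniv ▸ Set.mem_univ u
      rcases huniv with h | h
      · exact rule2 u h hne
      · have h1 : G.dist u v = 1 :=
          SimpleGraph.dist_eq_one_iff_adj.mpr (rule1B u h hne).symm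
        omega
  have hVne : Nonempty V := Fintype.card_pos_iff.mp (by omega)
  have hcompl : ∀ u : V, ∃ w, Gᶜ.Adj u w := by
    intro u
    obtain ⟨w, hw⟩ := Fintype.exists_ne_of_one_lt_card (by omega) u
    obtain ⟨p⟩ := hGc.preconnected u w
    cases p with
    | nil => exact absurd rfl hw
    | cons h _ => exact ⟨_, h⟩
  have hecc2 : ∀ u, 2 ≤ ecc G u := by
    intro u
    obtain ⟨w, hw⟩ := hcompl u
    have h0 : G.dist u w ≠ 0 := fun h0 => hw.ne (hG.dist_eq_zero_iff.mp h0)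
    have h1 : G.dist u w ≠ 1 := fun h1 =>
      (fun h => ((SimpleGraph.compl_adj G _ _).mp hw).2 h) (SimpleGraph.dist_eq_one_iff_adj.mp h1)
    calc 2 ≤ G.dist u w := by omega
    _ ≤ ecc G u := le_csSup (Set.Finite.bddAbove (Set.finite_range _)) ⟨w, rfl⟩
  have heccv : ecc G v = 2 := by
    obtain ⟨w, hw⟩ := hcompl v
    have h0 : G.dist v w ≠ 0 := fun h0 => hw.ne (hG.dist_eq_zero_iff.mp h0)
    have h1 : G.dist v w ≠ 1 := fun h1 =>
      (fun h => ((SimpleGraph.compl_adj G _ _).mp hw).2 h) (SimpleGraph.dist_eq_one_iff_adj.mp h1)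
    have h2 : G.dist v w = 2 := by have := hle2 w; omega
    apply le_antisymm
    · apply csSup_le (Set.range_nonempty _)
      rintro x ⟨u, rfl⟩
      exact hle2 u
    · calc (2 : ℕ) = G.dist v w := h2.symm
      _ ≤ ecc G v := le_csSup (Set.Finite.bddAbove (Set.finite_range _)) ⟨w, rfl⟩
  have hrad : rad G = 2 := by
    apply le_antisymm
    · have h : rad G ≤ ecc G v := csInf_le (OrderBot.bddBelow _) (Set.mem_range_self v)
      rw [heccv] at h
      exact h
    · apply le_csInf (Set.range_nonempty _)
      rintro x ⟨u, rfl⟩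
      exact hecc2 u
  exact ⟨v, by rw [heccv, hrad], hvA, hAeq, hBeq⟩
end

section
/- Let G be a finite connected simple graph. A set S of vertices of G is a 3-general position set if and only if every connected component of the subgraph induced by S is a clique, and whenever u and v are vertices of S lying in different components Q and Q' of the induced subgraph G[S] with d_G(u,v) = 2, then d_G(x,y) = 2 for all x in Q and all y in Q'. -/
open SimpleGraph

variable {V : Type*}

lemma aux_dist_two {G : SimpleGraph V} (hG : G.Connected) {u b v : V}
    (h1 : G.Adj u b) (h2 : G.Adj b v) (hne : u ≠ v) (hna : ¬ G.Adj u v) :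
    G.dist u v = 2 := by
  have ht := hG.dist_triangle (u := u) (v := b) (w := v)
  rw [dist_eq_one_iff_adj.mpr h1, dist_eq_one_iff_adj.mpr h2] at ht
  have h0 := hG.pos_dist_of_ne hne
  have h1' : G.dist u v ≠ 1 := fun h => hna (dist_eq_one_iff_adj.mp h)
  omega

lemma gp3_clique {G : SimpleGraph V} {S : Set V} (hG : G.Connected)
    (h : isGP3Set G S) : ∀ {u v : S}, (G.induce S).Walk u v →
    (u : V) = v ∨ G.Adj (u : V) (v : V) := by
  intro u v p
  induction p with
  | nil => exact Or.inl rfl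
  | @cons a b c hab p ih =>
    have hab' : G.Adj (a : V) (b : V) := hab
    rcases ih with h1 | h1
    · exact Or.inr (h1 ▸ hab')
    · by_cases hac : (a : V) = c
      · exact Or.inl hac
      by_cases hadj : G.Adj (a : V) (c : V)
      · exact Or.inr hadj
      exfalso
      have hd := aux_dist_two hG hab' h1 hac hadj
      refine h a a.2 b b.2 c c.2 hab'.ne h1.ne hac ⟨⟨hG.preconnected _ _, ?_⟩, by omega⟩
      rw [dist_eq_one_iff_adj.mpr hab', dist_eq_one_iff_adj.mpr h1, hd]

lemma gp3_spread {G : SimpleGraph V} {S : Set V} (hG : G.Connected)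
    (h : isGP3Set G S) {u v y : S} (hnr : ¬ (G.induce S).Reachable u v)
    (hd : G.dist (u : V) (v : V) = 2) (hvy : (G.induce S).Reachable v y) :
    G.dist (u : V) (y : V) = 2 := by
  obtain ⟨p⟩ := id hvy
  rcases gp3_clique hG h p with heq | hadj
  · rw [← heq]; exact hd
  · have hnruy : ¬ (G.induce S).Reachable u y :=
      fun hr => hnr (hr.trans hvy.symm)
    have huy_ne : (u : V) ≠ (y : V) := fun he => hnruy (Subtype.ext he ▸ Reachable.refl u)
    have huy_nadj : ¬ G.Adj (u : V) (y : V) := fun ha =>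
      hnruy (SimpleGraph.Adj.reachable (show (G.induce S).Adj u y from ha))
    have htri := hG.dist_triangle (u := (u : V)) (v := (v : V)) (w := (y : V))
    rw [hd, dist_eq_one_iff_adj.mpr hadj] at htri
    have h0 := hG.pos_dist_of_ne huy_ne
    have h1' : G.dist (u : V) (y : V) ≠ 1 := fun hh => huy_nadj (dist_eq_one_iff_adj.mp hh)
    have h3 : G.dist (u : V) (y : V) ≠ 3 := by
      intro h3
      have huv_ne : (u : V) ≠ (v : V) := fun he => hnr (Subtype.ext he ▸ Reachable.refl u)
      refine h u u.2 v v.2 y y.2 huv_ne hadj.ne huy_ne ⟨⟨hG.preconnected _ _, ?_⟩, by omega⟩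
      rw [hd, dist_eq_one_iff_adj.mpr hadj, h3]
    omega

/-- Characterization of `3`-general position sets: `S` is a `3`-general position set
iff the connected components of the induced subgraph `G[S]` are cliques, and whenever
`u, v ∈ S` lie in different components with `d_G(u,v) = 2`, then `d_G(x,y) = 2` for
every `x` in the component of `u` and every `y` in the component of `v`. -/
theorem isGP3Set_iff {V : Type*} [Fintype V] (G : SimpleGraph V) (hG : G.Connected)
    (S : Set V) :
    isGP3Set G S ↔
      ((∀ u v : S, (G.induce S).Reachable u v → u = v ∨ (G.induce S).Adj u v) ∧
       (∀ u v x y : S, ¬ (G.induce S).Reachable u v → G.dist (u : V) (v : V) = 2 →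
          (G.induce S).Reachable u x → (G.induce S).Reachable v y →
          G.dist (x : V) (y : V) = 2)) := by
  constructor
  · intro h
    constructor
    · intro u v hr
      obtain ⟨p⟩ := hr
      rcases gp3_clique hG h p with heq | hadj
      · exact Or.inl (Subtype.ext heq)
      · exact Or.inr hadj
    · intro u v x y hnr hd hux hvy
      have hnr2 : ¬ (G.induce S).Reachable v u := fun hr => hnr hr.symm
      have hd2 : G.dist (v : V) (u : V) = 2 := by rw [dist_comm]; exact hd
      have h1 : G.dist (x : V) (v : V) = 2 := by
        rw [dist_comm]
        exact gp3_spread hG h hnr2 hd2 hux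
      have hnr' : ¬ (G.induce S).Reachable x v :=
        fun hr => hnr ((hux.trans hr))
      exact gp3_spread hG h hnr' h1 hvy
  · rintro ⟨ha, hb⟩ u hu v hv w hw huv hvw huw ⟨⟨_, hgeo⟩, hle⟩
    have d1 := hG.pos_dist_of_ne huv
    have d2 := hG.pos_dist_of_ne hvw
    have huw_nadj_of : G.dist u w = 2 → ¬ G.Adj u w := fun hd hadj => by
      rw [dist_eq_one_iff_adj.mpr hadj] at hd; omega
    -- dist u w = 2 or 3
    rcases (by omega : G.dist u v + G.dist v w = 2 ∨ G.dist u v + G.dist v w = 3) with h2 | h3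
    · -- both distances 1
      have huv1 : G.dist u v = 1 := by omega
      have hvw1 : G.dist v w = 1 := by omega
      have hauv : G.Adj u v := dist_eq_one_iff_adj.mp huv1
      have havw : G.Adj v w := dist_eq_one_iff_adj.mp hvw1
      have hr : (G.induce S).Reachable ⟨u, hu⟩ ⟨w, hw⟩ :=
        (SimpleGraph.Adj.reachable (show (G.induce S).Adj ⟨u, hu⟩ ⟨v, hv⟩ from hauv)).trans
          (SimpleGraph.Adj.reachable (show (G.induce S).Adj ⟨v, hv⟩ ⟨w, hw⟩ from havw))
      rcases ha ⟨u, hu⟩ ⟨w, hw⟩ hr with heq | hadj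
      · exact huw (congrArg Subtype.val heq)
      · exact huw_nadj_of (by omega) hadj
    · rcases (by omega : (G.dist u v = 1 ∧ G.dist v w = 2) ∨
          (G.dist u v = 2 ∧ G.dist v w = 1)) with ⟨ha1, ha2⟩ | ⟨ha1, ha2⟩
      · have hauv : G.Adj u v := dist_eq_one_iff_adj.mp ha1
        have hnr : ¬ (G.induce S).Reachable ⟨v, hv⟩ ⟨w, hw⟩ := by
          intro hr
          rcases ha ⟨v, hv⟩ ⟨w, hw⟩ hr with heq | hadj
          · exact hvw (congrArg Subtype.val heq)
          · have h' : G.Adj v w := hadj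
            rw [dist_eq_one_iff_adj.mpr h'] at ha2; omega
        have := hb ⟨v, hv⟩ ⟨w, hw⟩ ⟨u, hu⟩ ⟨w, hw⟩ hnr ha2
          (SimpleGraph.Adj.reachable (show (G.induce S).Adj ⟨v, hv⟩ ⟨u, hu⟩ from hauv.symm))
          (Reachable.refl _)
        simp only at this
        omega
      · have havw : G.Adj v w := dist_eq_one_iff_adj.mp ha2
        have hnr : ¬ (G.induce S).Reachable ⟨u, hu⟩ ⟨v, hv⟩ := by
          intro hr
          rcases ha ⟨u, hu⟩ ⟨v, hv⟩ hr with heq | hadj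
          · exact huv (congrArg Subtype.val heq)
          · have h' : G.Adj u v := hadj
            rw [dist_eq_one_iff_adj.mpr h'] at ha1; omega
        have := hb ⟨u, hu⟩ ⟨v, hv⟩ ⟨u, hu⟩ ⟨w, hw⟩ hnr ha1
          (Reachable.refl _)
          (SimpleGraph.Adj.reachable (show (G.induce S).Adj ⟨v, hv⟩ ⟨w, hw⟩ from havw))
        simp only at this
        omega
end

section
/- Let G be a finite simple graph with n(G) ≥ 2 such that both G and its complement \bar{G} are connected. Then gp(G\bar{G}) = n(G) + 1 if and only if rad(G) = 2 and there exists a vertex v of eccentricity 2 in G such that (i) N_G(v) is a 3-general position set in \bar{G} and N_G²(v) = {u : d_G(u,v) = 2} is a 3-general position set in G, and (ii) for each x ∈ N_G(v) there exists y ∈ N_G²(v) such that xy is not an edge of G. -/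
open SimpleGraph

variable {V : Type*}

section Helpers

variable {W : Type*}

lemma dist_eq_two_iff' {G : SimpleGraph W} {u v : W} (hne : u ≠ v) :
    G.dist u v = 2 ↔ ¬G.Adj u v ∧ ∃ w, G.Adj u w ∧ G.Adj w v := by
  constructor
  · intro h
    obtain ⟨p, hp⟩ := SimpleGraph.exists_walk_of_dist_ne_zero (G := G) (u := u) (v := v)
      (by omega)
    rw [h] at hp
    refine ⟨fun hadj => by
      have := SimpleGraph.dist_eq_one_iff_adj.mpr hadj; omega, ?_⟩
    cases p with
    | nil => simp at hp
    | cons hadj q =>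
      cases q with
      | nil => simp at hp
      | cons hadj2 q2 =>
        have hq2 : q2.length = 0 := by
          simp only [SimpleGraph.Walk.length_cons] at hp; omega
        have heq := SimpleGraph.Walk.eq_of_length_eq_zero hq2
        exact ⟨_, hadj, heq ▸ hadj2⟩
  · rintro ⟨hnadj, w, h1, h2⟩
    have hle : G.dist u v ≤ 2 := by
      simpa using SimpleGraph.dist_le
        (SimpleGraph.Walk.cons h1 (SimpleGraph.Walk.cons h2 SimpleGraph.Walk.nil))
    have h0 : G.dist u v ≠ 0 := by
      rw [SimpleGraph.dist_ne_zero_iff_ne_and_reachable]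
      exact ⟨hne,
        (SimpleGraph.Walk.cons h1 (SimpleGraph.Walk.cons h2 SimpleGraph.Walk.nil)).reachable⟩
    have h1' : G.dist u v ≠ 1 := fun hh => hnadj (SimpleGraph.dist_eq_one_iff_adj.mp hh)
    omega

variable {G : SimpleGraph W}

lemma cp_adj_ll {a b : W} : (compPrism G).Adj (Sum.inl a) (Sum.inl b) ↔ G.Adj a b := Iff.rfl

lemma cp_adj_rr {a b : W} : (compPrism G).Adj (Sum.inr a) (Sum.inr b) ↔ Gᶜ.Adj a b := Iff.rfl

lemma cp_adj_lr {a b : W} : (compPrism G).Adj (Sum.inl a) (Sum.inr b) ↔ a = b := Iff.rfl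

lemma cp_adj_rl {a b : W} : (compPrism G).Adj (Sum.inr a) (Sum.inl b) ↔ a = b := Iff.rfl

lemma cp_reachable (x y : W ⊕ W) : (compPrism G).Reachable x y := by
  have key : ∀ a b : W, (compPrism G).Reachable (Sum.inl a) (Sum.inl b) := by
    intro a b
    by_cases h : a = b
    · subst h; exact SimpleGraph.Reachable.refl _
    by_cases hadj : G.Adj a b
    · exact SimpleGraph.Adj.reachable (cp_adj_ll.mpr hadj)
    · refine SimpleGraph.Walk.reachable
        (SimpleGraph.Walk.cons (cp_adj_lr.mpr rfl)
          (SimpleGraph.Walk.cons (cp_adj_rr.mpr ((SimpleGraph.compl_adj _ _ _).mpr ⟨h, hadj⟩))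
            (SimpleGraph.Walk.cons (cp_adj_rl.mpr rfl) SimpleGraph.Walk.nil)))
  have keyLR : ∀ a b : W, (compPrism G).Reachable (Sum.inl a) (Sum.inr b) := fun a b =>
    (key a b).trans (SimpleGraph.Adj.reachable (cp_adj_lr.mpr rfl))
  cases x with
  | inl a =>
    cases y with
    | inl b => exact key a b
    | inr b => exact keyLR a b
  | inr a =>
    cases y with
    | inl b => exact (keyLR b a).symm
    | inr b => exact ((keyLR a a).symm.trans (keyLR a b))

lemma cp_dist_lr_self (a : W) : (compPrism G).dist (Sum.inl a) (Sum.inr a) = 1 :=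
  SimpleGraph.dist_eq_one_iff_adj.mpr (cp_adj_lr.mpr rfl)

lemma cp_dist_lr {a b : W} (h : a ≠ b) : (compPrism G).dist (Sum.inl a) (Sum.inr b) = 2 := by
  rw [dist_eq_two_iff' (by simp)]
  refine ⟨fun hadj => h (cp_adj_lr.mp hadj), ?_⟩
  by_cases hadj : G.Adj a b
  · exact ⟨Sum.inl b, cp_adj_ll.mpr hadj, cp_adj_lr.mpr rfl⟩
  · exact ⟨Sum.inr a, cp_adj_lr.mpr rfl, cp_adj_rr.mpr ((SimpleGraph.compl_adj _ _ _).mpr ⟨h, hadj⟩)⟩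

lemma cp_dist_ll (hG : G.Connected) {a b : W} (h : a ≠ b) :
    (compPrism G).dist (Sum.inl a) (Sum.inl b) = min (G.dist a b) 3 := by
  have hd : 1 ≤ G.dist a b := hG.pos_dist_of_ne h
  by_cases h1 : G.dist a b = 1
  · rw [SimpleGraph.dist_eq_one_iff_adj.mpr
      (cp_adj_ll.mpr (SimpleGraph.dist_eq_one_iff_adj.mp h1))]
    omega
  by_cases h2 : G.dist a b = 2
  · obtain ⟨hnadj, w, hw1, hw2⟩ := (dist_eq_two_iff' h).mp h2
    rw [(dist_eq_two_iff' (by simp [h])).mpr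
      ⟨fun hadj => hnadj (cp_adj_ll.mp hadj), Sum.inl w, cp_adj_ll.mpr hw1, cp_adj_ll.mpr hw2⟩]
    omega
  · have hnadj : ¬G.Adj a b := fun hadj => h1 (SimpleGraph.dist_eq_one_iff_adj.mpr hadj)
    have hub : (compPrism G).dist (Sum.inl a) (Sum.inl b) ≤ 3 := by
      simpa using SimpleGraph.dist_le
        (SimpleGraph.Walk.cons (cp_adj_lr.mpr rfl)
          (SimpleGraph.Walk.cons (cp_adj_rr.mpr ((SimpleGraph.compl_adj _ _ _).mpr ⟨h, hnadj⟩))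
            (SimpleGraph.Walk.cons (cp_adj_rl.mpr rfl) SimpleGraph.Walk.nil)))
    have h0 : (compPrism G).dist (Sum.inl a) (Sum.inl b) ≠ 0 := by
      rw [SimpleGraph.dist_ne_zero_iff_ne_and_reachable]
      exact ⟨by simp [h], cp_reachable _ _⟩
    have h1' : (compPrism G).dist (Sum.inl a) (Sum.inl b) ≠ 1 := fun hh =>
      hnadj (cp_adj_ll.mp (SimpleGraph.dist_eq_one_iff_adj.mp hh))
    have h2' : (compPrism G).dist (Sum.inl a) (Sum.inl b) ≠ 2 := by
      intro hh
      obtain ⟨-, w, hw1, hw2⟩ := (dist_eq_two_iff' (by simp [h])).mp hh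
      cases w with
      | inl c =>
        have : G.dist a b ≤ 2 := by
          simpa using SimpleGraph.dist_le
            (SimpleGraph.Walk.cons (cp_adj_ll.mp hw1)
              (SimpleGraph.Walk.cons (cp_adj_ll.mp hw2) SimpleGraph.Walk.nil))
        omega
      | inr c =>
        exact h ((cp_adj_lr.mp hw1).trans (cp_adj_rl.mp hw2))
    omega

lemma cp_dist_rr (hGc : Gᶜ.Connected) {a b : W} (h : a ≠ b) :
    (compPrism G).dist (Sum.inr a) (Sum.inr b) = min (Gᶜ.dist a b) 3 := by
  have hd : 1 ≤ Gᶜ.dist a b := hGc.pos_dist_of_ne h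
  by_cases h1 : Gᶜ.dist a b = 1
  · rw [SimpleGraph.dist_eq_one_iff_adj.mpr
      (cp_adj_rr.mpr (SimpleGraph.dist_eq_one_iff_adj.mp h1))]
    omega
  by_cases h2 : Gᶜ.dist a b = 2
  · obtain ⟨hnadj, w, hw1, hw2⟩ := (dist_eq_two_iff' h).mp h2
    rw [(dist_eq_two_iff' (by simp [h])).mpr
      ⟨fun hadj => hnadj (cp_adj_rr.mp hadj), Sum.inr w, cp_adj_rr.mpr hw1, cp_adj_rr.mpr hw2⟩]
    omega
  · have hnadj : ¬Gᶜ.Adj a b := fun hadj => h1 (SimpleGraph.dist_eq_one_iff_adj.mpr hadj)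
    have hadjG : G.Adj a b := by
      by_contra hc
      exact hnadj ((SimpleGraph.compl_adj _ _ _).mpr ⟨h, hc⟩)
    have hub : (compPrism G).dist (Sum.inr a) (Sum.inr b) ≤ 3 := by
      simpa using SimpleGraph.dist_le
        (SimpleGraph.Walk.cons (cp_adj_rl.mpr rfl)
          (SimpleGraph.Walk.cons (cp_adj_ll.mpr hadjG)
            (SimpleGraph.Walk.cons (cp_adj_lr.mpr rfl) SimpleGraph.Walk.nil)))
    have h0 : (compPrism G).dist (Sum.inr a) (Sum.inr b) ≠ 0 := by
      rw [SimpleGraph.dist_ne_zero_iff_ne_and_reachable]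
      exact ⟨by simp [h], cp_reachable _ _⟩
    have h1' : (compPrism G).dist (Sum.inr a) (Sum.inr b) ≠ 1 := fun hh =>
      hnadj (cp_adj_rr.mp (SimpleGraph.dist_eq_one_iff_adj.mp hh))
    have h2' : (compPrism G).dist (Sum.inr a) (Sum.inr b) ≠ 2 := by
      intro hh
      obtain ⟨-, w, hw1, hw2⟩ := (dist_eq_two_iff' (by simp [h])).mp hh
      cases w with
      | inr c =>
        have : Gᶜ.dist a b ≤ 2 := by
          simpa using SimpleGraph.dist_le
            (SimpleGraph.Walk.cons (cp_adj_rr.mp hw1)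
              (SimpleGraph.Walk.cons (cp_adj_rr.mp hw2) SimpleGraph.Walk.nil))
        omega
      | inl c =>
        exact h ((cp_adj_rl.mp hw1).trans (cp_adj_lr.mp hw2))
    omega

lemma cp_dist_rl {a b : W} (h : a ≠ b) : (compPrism G).dist (Sum.inr a) (Sum.inl b) = 2 := by
  rw [SimpleGraph.dist_comm]
  exact cp_dist_lr (Ne.symm h)

lemma cp_dist_rl_self (a : W) : (compPrism G).dist (Sum.inr a) (Sum.inl a) = 1 := by
  rw [SimpleGraph.dist_comm]
  exact cp_dist_lr_self a

lemma liesOnGeodesic_comm {G : SimpleGraph W} {u v w : W} :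
    liesOnGeodesic G u v w ↔ liesOnGeodesic G w v u := by
  unfold liesOnGeodesic
  rw [SimpleGraph.dist_comm (G := G) (u := w) (v := v),
    SimpleGraph.dist_comm (G := G) (u := v) (v := u),
    SimpleGraph.dist_comm (G := G) (u := w) (v := u)]
  constructor
  · rintro ⟨hr, he⟩; exact ⟨hr.symm, by omega⟩
  · rintro ⟨hr, he⟩; exact ⟨hr.symm, by omega⟩

end Helpers

section CardHelpers

variable {V : Type*} [Fintype V] {G : SimpleGraph V}

lemma gp_ncard_le (hG : G.Connected) (hGc : Gᶜ.Connected) {S : Set (V ⊕ V)}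
    (hS : isGenPosSet (compPrism G) S) : S.ncard ≤ Fintype.card V + 1 := by
  classical
  set A : Set V := Sum.inl ⁻¹' S with hA
  set B : Set V := Sum.inr ⁻¹' S with hB
  have hSeq : S = Sum.inl '' A ∪ Sum.inr '' B := by
    ext x; cases x <;> simp [hA, hB]
  have hinter : (A ∩ B).Subsingleton := by
    intro u hu v hv
    by_contra hne
    by_cases hadj : G.Adj u v
    · refine hS (Sum.inl u) hu.1 (Sum.inl v) hv.1 (Sum.inr v) hv.2
        (by simp [hne]) (by simp) (by simp) ⟨cp_reachable _ _, ?_⟩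
      have h1 : G.dist u v = 1 := SimpleGraph.dist_eq_one_iff_adj.mpr hadj
      rw [cp_dist_ll hG hne, cp_dist_lr_self, cp_dist_lr hne, h1]; norm_num
    · refine hS (Sum.inl u) hu.1 (Sum.inr u) hu.2 (Sum.inr v) hv.2
        (by simp) (by simp [hne]) (by simp) ⟨cp_reachable _ _, ?_⟩
      have h1 : Gᶜ.dist u v = 1 := SimpleGraph.dist_eq_one_iff_adj.mpr
        ((SimpleGraph.compl_adj _ _ _).mpr ⟨hne, hadj⟩)
      rw [cp_dist_lr_self, cp_dist_rr hGc hne, cp_dist_lr hne, h1]; norm_num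
  have hcard : S.ncard = A.ncard + B.ncard := by
    rw [hSeq, Set.ncard_union_eq ?_ (Set.toFinite _) (Set.toFinite _),
      Set.ncard_image_of_injective _ Sum.inl_injective,
      Set.ncard_image_of_injective _ Sum.inr_injective]
    rw [Set.disjoint_left]
    rintro x ⟨a, -, rfl⟩ ⟨b, -, hb⟩
    exact Sum.inl_ne_inr hb.symm
  have h1 := Set.ncard_union_add_ncard_inter A B (Set.toFinite _) (Set.toFinite _)
  have h2 : (A ∪ B).ncard ≤ Fintype.card V := by
    have := Set.ncard_le_ncard (Set.subset_univ (A ∪ B)) (Set.toFinite _)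
    rwa [Set.ncard_univ, Nat.card_eq_fintype_card] at this
  have h3 : (A ∩ B).ncard ≤ 1 := (Set.ncard_le_one_iff (Set.toFinite _)).mpr
    fun ha hb => hinter ha hb
  omega

lemma gpSetSet_nonempty (G : SimpleGraph V) :
    (0 : ℕ) ∈ {n : ℕ | ∃ S : Set (V ⊕ V), isGenPosSet (compPrism G) S ∧ S.ncard = n} :=
  ⟨∅, fun u hu => (Set.notMem_empty u hu).elim, by simp⟩

lemma gpNum_attained (hG : G.Connected) (hGc : Gᶜ.Connected) :
    ∃ S : Set (V ⊕ V), isGenPosSet (compPrism G) S ∧ S.ncard = gpNum (compPrism G) := by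
  have hbdd : BddAbove {n : ℕ | ∃ S : Set (V ⊕ V), isGenPosSet (compPrism G) S ∧ S.ncard = n} :=
    ⟨Fintype.card V + 1, by rintro n ⟨S, hS, rfl⟩; exact gp_ncard_le hG hGc hS⟩
  exact Nat.sSup_mem ⟨0, gpSetSet_nonempty G⟩ hbdd

lemma gpNum_le (hG : G.Connected) (hGc : Gᶜ.Connected) :
    gpNum (compPrism G) ≤ Fintype.card V + 1 :=
  csSup_le ⟨0, gpSetSet_nonempty G⟩ (by rintro n ⟨S, hS, rfl⟩; exact gp_ncard_le hG hGc hS)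

lemma le_ecc (G : SimpleGraph V) (v u : V) : G.dist v u ≤ ecc G v :=
  le_csSup (Set.finite_range _).bddAbove ⟨u, rfl⟩

lemma ecc_le [Nonempty V] {v : V} {k : ℕ} (h : ∀ u, G.dist v u ≤ k) : ecc G v ≤ k :=
  csSup_le (Set.range_nonempty _) (by rintro _ ⟨u, rfl⟩; exact h u)

lemma exists_not_adj (hGc : Gᶜ.Connected) (hn : 2 ≤ Fintype.card V) (u : V) :
    ∃ w, w ≠ u ∧ ¬G.Adj u w := by
  obtain ⟨w, hw⟩ := Fintype.exists_ne_of_one_lt_card (by omega) u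
  obtain ⟨p⟩ := hGc u w
  cases p with
  | nil => exact absurd rfl hw
  | cons h q =>
    exact ⟨_, fun he => Gᶜ.loopless.irrefl u (by rwa [he] at h), ((SimpleGraph.compl_adj _ _ _).mp h).2⟩

lemma gp3_insert {H : SimpleGraph V} (hH : H.Connected) {v : V} {T : Set V}
    (hT : isGP3Set H T) (hd : ∀ x ∈ T, H.dist v x = 2) :
    isGP3Set H ({v} ∪ T) := by
  intro a ha b hb c hc hab hbc hac h
  obtain ⟨⟨hr, he⟩, hle⟩ := h
  rcases hb with hb | hb
  · -- b = v
    have hbv : b = v := hb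
    subst hbv
    have haT : a ∈ T := ha.resolve_left (fun h => hab h)
    have hcT : c ∈ T := hc.resolve_left (fun h => hbc (Eq.symm h))
    have h1 : H.dist a b = 2 := by rw [SimpleGraph.dist_comm]; exact hd a haT
    have h2 : H.dist b c = 2 := hd c hcT
    omega
  · rcases ha with ha | ha
    · -- a = v
      have hav : a = v := ha
      subst hav
      have hcT : c ∈ T := hc.resolve_left (fun h => hac (Eq.symm h))
      have h1 : H.dist a b = 2 := hd b hb
      have h2 : H.dist a c = 2 := hd c hcT
      have h3 : H.dist b c = 0 := by omega
      exact hbc ((hH.dist_eq_zero_iff).mp h3)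
    · rcases hc with hc | hc
      · -- c = v
        have hcv : c = v := hc
        subst hcv
        have h1 : H.dist b c = 2 := by rw [SimpleGraph.dist_comm]; exact hd b hb
        have h2 : H.dist a c = 2 := by rw [SimpleGraph.dist_comm]; exact hd a ha
        have h3 : H.dist a b = 0 := by omega
        exact hab ((hH.dist_eq_zero_iff).mp h3)
      · exact hT a ha b hb c hc hab hbc hac ⟨⟨hr, he⟩, hle⟩

lemma backward_dir (hG : G.Connected) (hGc : Gᶜ.Connected)
    {v : V} (hecc : ecc G v = 2)
    (hN : isGP3Set Gᶜ (G.neighborSet v)) (hN2 : isGP3Set G {u : V | G.dist u v = 2})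
    (hii : ∀ x ∈ G.neighborSet v, ∃ y ∈ {u : V | G.dist u v = 2}, ¬G.Adj x y) :
    gpNum (compPrism G) = Fintype.card V + 1 := by
  classical
  set N : Set V := G.neighborSet v with hNdef
  set N2 : Set V := {u : V | G.dist u v = 2} with hN2def
  have hdistle : ∀ u, G.dist v u ≤ 2 := fun u => hecc ▸ le_ecc G v u
  have hvN : v ∉ N := fun h => G.loopless.irrefl v h
  have hvN2 : v ∉ N2 := by simp [hN2def, SimpleGraph.dist_self]
  have hNN2 : ∀ x, x ∈ N → x ∈ N2 → False := by
    intro x hx1 hx2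
    have : G.dist x v = 1 := by
      rw [SimpleGraph.dist_comm]; exact SimpleGraph.dist_eq_one_iff_adj.mpr hx1
    rw [hN2def] at hx2; simp at hx2; omega
  -- the two distance facts on the "hub" vertex
  have hdN2 : ∀ a ∈ N2, G.dist v a = 2 := by
    intro a ha; rw [SimpleGraph.dist_comm]; exact ha
  have hdc : ∀ x ∈ N, Gᶜ.dist v x = 2 := by
    intro x hx
    obtain ⟨y, hy, hxy⟩ := hii x hx
    have hvx : v ≠ x := G.ne_of_adj hx
    refine (dist_eq_two_iff' hvx).mpr ⟨?_, y, ?_, ?_⟩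
    · intro hadj
      exact ((SimpleGraph.compl_adj _ _ _).mp hadj).2 hx
    · refine (SimpleGraph.compl_adj _ _ _).mpr ⟨?_, ?_⟩
      · intro hvy; rw [← hvy] at hy; exact hvN2 hy
      · intro hadj
        have : G.dist y v = 1 := by
          rw [SimpleGraph.dist_comm]; exact SimpleGraph.dist_eq_one_iff_adj.mpr hadj
        have hy2 : G.dist y v = 2 := hy
        omega
    · refine (SimpleGraph.compl_adj _ _ _).mpr ⟨?_, ?_⟩
      · intro hyx; rw [← hyx] at hx; exact hNN2 y hx hy
      · intro hadj; exact hxy (hadj.symm)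
  -- membership in the union sets
  have memA : ∀ a, a ∈ ({v} : Set V) ∪ N2 → a = v ∨ G.dist v a = 2 := by
    rintro a (ha | ha)
    · exact Or.inl ha
    · exact Or.inr (hdN2 a ha)
  have memB : ∀ b, b ∈ ({v} : Set V) ∪ N → b = v ∨ Gᶜ.dist v b = 2 := by
    rintro b (hb | hb)
    · exact Or.inl hb
    · exact Or.inr (hdc b hb)
  -- capped distances within the two sides
  have dLL : ∀ a b : V, a ≠ b →
      (compPrism G).dist (Sum.inl a) (Sum.inl b) = min (G.dist a b) 3 :=
    fun a b h => cp_dist_ll hG h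
  have dRR : ∀ a b : V, a ≠ b →
      (compPrism G).dist (Sum.inr a) (Sum.inr b) = min (Gᶜ.dist a b) 3 :=
    fun a b h => cp_dist_rr hGc h
  have dLLv : ∀ a ∈ ({v} : Set V) ∪ N2, a ≠ v →
      (compPrism G).dist (Sum.inl v) (Sum.inl a) = 2 := by
    intro a ha hav
    have h2 : G.dist v a = 2 := (memA a ha).resolve_left (fun h => hav h)
    rw [dLL v a (Ne.symm hav), h2]; norm_num
  have dRRv : ∀ b ∈ ({v} : Set V) ∪ N, b ≠ v →
      (compPrism G).dist (Sum.inr v) (Sum.inr b) = 2 := by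
    intro b hb hbv
    have h2 : Gᶜ.dist v b = 2 := (memB b hb).resolve_left (fun h => hbv h)
    rw [dRR v b (Ne.symm hbv), h2]; norm_num
  -- the two gp3 sets with the hub added
  have hA3 : isGP3Set G (({v} : Set V) ∪ N2) := gp3_insert hG hN2 hdN2
  have hB3 : isGP3Set Gᶜ (({v} : Set V) ∪ N) := gp3_insert hGc hN hdc
  -- the candidate set
  set S : Set (V ⊕ V) :=
    Sum.inl '' (({v} : Set V) ∪ N2) ∪ Sum.inr '' (({v} : Set V) ∪ N) with hSdef
  -- core case lemmas
  have core1 : ∀ a ∈ ({v} : Set V) ∪ N2, ∀ b ∈ ({v} : Set V) ∪ N2,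
      ∀ c ∈ ({v} : Set V) ∪ N2, a ≠ b → b ≠ c → a ≠ c →
      (compPrism G).dist (Sum.inl a) (Sum.inl b) +
        (compPrism G).dist (Sum.inl b) (Sum.inl c) =
        (compPrism G).dist (Sum.inl a) (Sum.inl c) → False := by
    intro a ha b hb c hc hab hbc hac he
    rw [dLL a b hab, dLL b c hbc, dLL a c hac] at he
    have hp : 1 ≤ G.dist a b := hG.pos_dist_of_ne hab
    have hq : 1 ≤ G.dist b c := hG.pos_dist_of_ne hbc
    have hr : 1 ≤ G.dist a c := hG.pos_dist_of_ne hac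
    have htri : G.dist a c ≤ G.dist a b + G.dist b c := hG.dist_triangle
    exact hA3 a ha b hb c hc hab hbc hac
      ⟨⟨(hG a c), by omega⟩, by omega⟩
  have core4 : ∀ a ∈ ({v} : Set V) ∪ N, ∀ b ∈ ({v} : Set V) ∪ N,
      ∀ c ∈ ({v} : Set V) ∪ N, a ≠ b → b ≠ c → a ≠ c →
      (compPrism G).dist (Sum.inr a) (Sum.inr b) +
        (compPrism G).dist (Sum.inr b) (Sum.inr c) =
        (compPrism G).dist (Sum.inr a) (Sum.inr c) → False := by
    intro a ha b hb c hc hab hbc hac he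
    rw [dRR a b hab, dRR b c hbc, dRR a c hac] at he
    have hp : 1 ≤ Gᶜ.dist a b := hGc.pos_dist_of_ne hab
    have hq : 1 ≤ Gᶜ.dist b c := hGc.pos_dist_of_ne hbc
    have hr : 1 ≤ Gᶜ.dist a c := hGc.pos_dist_of_ne hac
    have htri : Gᶜ.dist a c ≤ Gᶜ.dist a b + Gᶜ.dist b c := hGc.dist_triangle
    exact hB3 a ha b hb c hc hab hbc hac
      ⟨⟨(hGc a c), by omega⟩, by omega⟩
  have core2 : ∀ a ∈ ({v} : Set V) ∪ N2, ∀ b ∈ ({v} : Set V) ∪ N2,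
      ∀ c ∈ ({v} : Set V) ∪ N, a ≠ b →
      (compPrism G).dist (Sum.inl a) (Sum.inl b) +
        (compPrism G).dist (Sum.inl b) (Sum.inr c) =
        (compPrism G).dist (Sum.inl a) (Sum.inr c) → False := by
    intro a ha b hb c hc hab he
    by_cases hbc : b = c
    · -- then b = c = v
      have hbv : b = v := by
        rcases hb with hb | hb
        · exact hb
        · rcases hc with hc | hc
          · exact hbc.trans hc
          · exact (hNN2 b (hbc ▸ hc) hb).elim
      have hcv : c = v := hbc ▸ hbv
      rw [hbv, hcv] at he
      have hav : a ≠ v := fun h => hab (h.trans hbv.symm)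
      have e1 : (compPrism G).dist (Sum.inl a) (Sum.inl v) = 2 := by
        rw [SimpleGraph.dist_comm]; exact dLLv a ha hav
      rw [e1, cp_dist_lr_self, cp_dist_lr hav] at he
      omega
    · have h1 : (compPrism G).dist (Sum.inl b) (Sum.inr c) = 2 := cp_dist_lr hbc
      have h2 : (compPrism G).dist (Sum.inl a) (Sum.inr c) ≤ 2 := by
        by_cases hac : a = c
        · subst hac; rw [cp_dist_lr_self]; omega
        · rw [cp_dist_lr hac]
      have h3 : 1 ≤ (compPrism G).dist (Sum.inl a) (Sum.inl b) := by
        rw [dLL a b hab]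
        have := hG.pos_dist_of_ne hab
        omega
      omega
  have core5 : ∀ a ∈ ({v} : Set V) ∪ N, ∀ b ∈ ({v} : Set V) ∪ N,
      ∀ c ∈ ({v} : Set V) ∪ N2, a ≠ b →
      (compPrism G).dist (Sum.inr a) (Sum.inr b) +
        (compPrism G).dist (Sum.inr b) (Sum.inl c) =
        (compPrism G).dist (Sum.inr a) (Sum.inl c) → False := by
    intro a ha b hb c hc hab he
    by_cases hbc : b = c
    · have hbv : b = v := by
        rcases hb with hb | hb
        · exact hb
        · rcases hc with hc | hc
          · exact hbc.trans hc
          · exact (hNN2 b hb (hbc ▸ hc)).elim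
      have hcv : c = v := hbc ▸ hbv
      rw [hbv, hcv] at he
      have hav : a ≠ v := fun h => hab (h.trans hbv.symm)
      have e1 : (compPrism G).dist (Sum.inr a) (Sum.inr v) = 2 := by
        rw [SimpleGraph.dist_comm]; exact dRRv a ha hav
      rw [e1, cp_dist_rl_self, cp_dist_rl hav] at he
      omega
    · have h1 : (compPrism G).dist (Sum.inr b) (Sum.inl c) = 2 := cp_dist_rl hbc
      have h2 : (compPrism G).dist (Sum.inr a) (Sum.inl c) ≤ 2 := by
        by_cases hac : a = c
        · subst hac; rw [cp_dist_rl_self]; omega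
        · rw [cp_dist_rl hac]
      have h3 : 1 ≤ (compPrism G).dist (Sum.inr a) (Sum.inr b) := by
        rw [dRR a b hab]
        have := hGc.pos_dist_of_ne hab
        omega
      omega
  have core6 : ∀ a ∈ ({v} : Set V) ∪ N2, ∀ b ∈ ({v} : Set V) ∪ N,
      ∀ c ∈ ({v} : Set V) ∪ N2, a ≠ c →
      (compPrism G).dist (Sum.inl a) (Sum.inr b) +
        (compPrism G).dist (Sum.inr b) (Sum.inl c) =
        (compPrism G).dist (Sum.inl a) (Sum.inl c) → False := by
    intro a ha b hb c hc hac he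
    have hrhs : (compPrism G).dist (Sum.inl a) (Sum.inl c) ≤ 3 := by
      rw [dLL a c hac]; omega
    by_cases hab : a = b
    · -- a = b = v
      have hav : a = v := by
        rcases ha with ha | ha
        · exact ha
        · rcases hb with hb | hb
          · exact hab.trans hb
          · exact (hNN2 a (hab ▸ hb) ha).elim
      have hbv : b = v := hab ▸ hav
      rw [hav, hbv] at he
      have hcv : c ≠ v := fun h => hac (hav.trans h.symm)
      rw [cp_dist_lr_self, cp_dist_rl (fun h : v = c => hcv h.symm),
        dLLv c hc hcv] at he
      omega
    · by_cases hbc : b = c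
      · have hcv : c = v := by
          rcases hc with hc | hc
          · exact hc
          · rcases hb with hb | hb
            · exact hbc.symm.trans hb
            · exact (hNN2 c (hbc ▸ hb) hc).elim
        have hbv : b = v := hbc ▸ hcv
        rw [hbv, hcv] at he
        have hav : a ≠ v := fun h => hac (h.trans hcv.symm)
        have e1 : (compPrism G).dist (Sum.inl a) (Sum.inl v) = 2 := by
          rw [SimpleGraph.dist_comm]; exact dLLv a ha hav
        rw [cp_dist_lr hav, cp_dist_rl_self, e1] at he
        omega
      · rw [cp_dist_lr hab, cp_dist_rl hbc] at he
        omega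
  have core3 : ∀ a ∈ ({v} : Set V) ∪ N, ∀ b ∈ ({v} : Set V) ∪ N2,
      ∀ c ∈ ({v} : Set V) ∪ N, a ≠ c →
      (compPrism G).dist (Sum.inr a) (Sum.inl b) +
        (compPrism G).dist (Sum.inl b) (Sum.inr c) =
        (compPrism G).dist (Sum.inr a) (Sum.inr c) → False := by
    intro a ha b hb c hc hac he
    have hrhs : (compPrism G).dist (Sum.inr a) (Sum.inr c) ≤ 3 := by
      rw [dRR a c hac]; omega
    by_cases hab : a = b
    · have hav : a = v := by
        rcases ha with ha | ha
        · exact ha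
        · rcases hb with hb | hb
          · exact hab.trans hb
          · exact (hNN2 a ha (hab ▸ hb)).elim
      have hbv : b = v := hab ▸ hav
      rw [hav, hbv] at he
      have hcv : c ≠ v := fun h => hac (hav.trans h.symm)
      rw [cp_dist_rl_self, cp_dist_lr (fun h : v = c => hcv h.symm),
        dRRv c hc hcv] at he
      omega
    · by_cases hbc : b = c
      · have hcv : c = v := by
          rcases hc with hc | hc
          · exact hc
          · rcases hb with hb | hb
            · exact hbc.symm.trans hb
            · exact (hNN2 c hc (hbc ▸ hb)).elim
        have hbv : b = v := hbc ▸ hcv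
        rw [hbv, hcv] at he
        have hav : a ≠ v := fun h => hac (h.trans hcv.symm)
        have e1 : (compPrism G).dist (Sum.inr a) (Sum.inr v) = 2 := by
          rw [SimpleGraph.dist_comm]; exact dRRv a ha hav
        rw [cp_dist_rl hav, cp_dist_lr_self, e1] at he
        omega
      · rw [cp_dist_rl hab, cp_dist_lr hbc] at he
        omega
  -- S is a general position set
  have hSgp : isGenPosSet (compPrism G) S := by
    rintro x hx y hy z hz hxy hyz hxz ⟨hr, he⟩
    rcases hx with ⟨a, ha, rfl⟩ | ⟨a, ha, rfl⟩ <;>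
      rcases hy with ⟨b, hb, rfl⟩ | ⟨b, hb, rfl⟩ <;>
        rcases hz with ⟨c, hc, rfl⟩ | ⟨c, hc, rfl⟩
    · -- LLL
      exact core1 a ha b hb c hc (fun h => hxy (h ▸ rfl)) (fun h => hyz (h ▸ rfl))
        (fun h => hxz (h ▸ rfl)) he
    · -- LLR
      exact core2 a ha b hb c hc (fun h => hxy (h ▸ rfl)) he
    · -- LRL
      exact core6 a ha b hb c hc (fun h => hxz (h ▸ rfl)) he
    · -- LRR : reverse to RRL (core5)
      have he' : (compPrism G).dist (Sum.inr c) (Sum.inr b) +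
          (compPrism G).dist (Sum.inr b) (Sum.inl a) =
          (compPrism G).dist (Sum.inr c) (Sum.inl a) := by
        have e1 := SimpleGraph.dist_comm (G := compPrism G) (u := Sum.inl a) (v := Sum.inr b)
        have e2 := SimpleGraph.dist_comm (G := compPrism G) (u := Sum.inr b) (v := Sum.inr c)
        have e3 := SimpleGraph.dist_comm (G := compPrism G) (u := Sum.inl a) (v := Sum.inr c)
        omega
      exact core5 c hc b hb a ha (fun h => hyz (h ▸ rfl)) he'
    · -- RLL : reverse to LLR (core2)
      have he' : (compPrism G).dist (Sum.inl c) (Sum.inl b) +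
          (compPrism G).dist (Sum.inl b) (Sum.inr a) =
          (compPrism G).dist (Sum.inl c) (Sum.inr a) := by
        have e1 := SimpleGraph.dist_comm (G := compPrism G) (u := Sum.inr a) (v := Sum.inl b)
        have e2 := SimpleGraph.dist_comm (G := compPrism G) (u := Sum.inl b) (v := Sum.inl c)
        have e3 := SimpleGraph.dist_comm (G := compPrism G) (u := Sum.inr a) (v := Sum.inl c)
        omega
      exact core2 c hc b hb a ha (fun h => hyz (h ▸ rfl)) he'
    · -- RLR
      exact core3 a ha b hb c hc (fun h => hxz (h ▸ rfl)) he
    · -- RRL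
      exact core5 a ha b hb c hc (fun h => hxy (h ▸ rfl)) he
    · -- RRR
      exact core4 a ha b hb c hc (fun h => hxy (h ▸ rfl)) (fun h => hyz (h ▸ rfl))
        (fun h => hxz (h ▸ rfl)) he
  -- cardinality of S
  have hpart : ({v} : Set V) ∪ N ∪ N2 = Set.univ := by
    ext u
    simp only [Set.mem_union, Set.mem_univ, iff_true, Set.mem_singleton_iff]
    by_cases huv : u = v
    · exact Or.inl (Or.inl huv)
    · have h1 : G.dist v u ≤ 2 := hdistle u
      have h0 : G.dist v u ≠ 0 := fun h => huv ((hG.dist_eq_zero_iff.mp h).symm)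
      by_cases h2 : G.dist v u = 1
      · exact Or.inl (Or.inr (SimpleGraph.dist_eq_one_iff_adj.mp h2))
      · refine Or.inr ?_
        show G.dist u v = 2
        rw [SimpleGraph.dist_comm]; omega
  have hcardVN : 1 + N.ncard + N2.ncard = Fintype.card V := by
    have h1 : (({v} : Set V) ∪ N ∪ N2).ncard = Fintype.card V := by
      rw [hpart, Set.ncard_univ, Nat.card_eq_fintype_card]
    rw [Set.ncard_union_eq ?_ (Set.toFinite _) (Set.toFinite _)] at h1
    · rw [Set.ncard_union_eq ?_ (Set.toFinite _) (Set.toFinite _)] at h1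
      · rw [Set.ncard_singleton] at h1; omega
      · rw [Set.disjoint_left]; rintro x rfl; exact hvN
    · rw [Set.disjoint_left]
      rintro x (hx | hx) hx2
      · exact hvN2 (hx ▸ hx2)
      · exact hNN2 x hx hx2
  have hScard : S.ncard = Fintype.card V + 1 := by
    rw [hSdef, Set.ncard_union_eq ?_ (Set.toFinite _) (Set.toFinite _),
      Set.ncard_image_of_injective _ Sum.inl_injective,
      Set.ncard_image_of_injective _ Sum.inr_injective]
    · rw [Set.ncard_union_eq ?_ (Set.toFinite _) (Set.toFinite _),
        Set.ncard_union_eq ?_ (Set.toFinite _) (Set.toFinite _),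
        Set.ncard_singleton]
      · omega
      · rw [Set.disjoint_left]; rintro x rfl; exact hvN
      · rw [Set.disjoint_left]; rintro x rfl; exact hvN2
    · rw [Set.disjoint_left]
      rintro x ⟨p, -, rfl⟩ ⟨q, -, hq⟩
      exact Sum.inl_ne_inr hq.symm
  -- conclude
  have hbdd : BddAbove {n : ℕ | ∃ T : Set (V ⊕ V), isGenPosSet (compPrism G) T ∧ T.ncard = n} :=
    ⟨Fintype.card V + 1, by rintro n ⟨T, hT, rfl⟩; exact gp_ncard_le hG hGc hT⟩
  refine le_antisymm (gpNum_le hG hGc) ?_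
  exact le_csSup hbdd ⟨S, hSgp, hScard⟩

lemma forward_dir (hn : 2 ≤ Fintype.card V) (hG : G.Connected) (hGc : Gᶜ.Connected)
    (hgp : gpNum (compPrism G) = Fintype.card V + 1) :
    rad G = 2 ∧ ∃ v : V, ecc G v = 2 ∧
      (isGP3Set Gᶜ (G.neighborSet v) ∧ isGP3Set G {u : V | G.dist u v = 2}) ∧
      (∀ x ∈ G.neighborSet v, ∃ y ∈ {u : V | G.dist u v = 2}, ¬G.Adj x y) := by
  classical
  have hnonV : Nonempty V := Fintype.card_pos_iff.mp (by omega)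
  obtain ⟨S, hS, hScard⟩ := gpNum_attained hG hGc
  rw [hgp] at hScard
  set A : Set V := Sum.inl ⁻¹' S with hA
  set B : Set V := Sum.inr ⁻¹' S with hB
  have hSeq : S = Sum.inl '' A ∪ Sum.inr '' B := by
    ext x; cases x <;> simp [hA, hB]
  have hcard : S.ncard = A.ncard + B.ncard := by
    rw [hSeq, Set.ncard_union_eq ?_ (Set.toFinite _) (Set.toFinite _),
      Set.ncard_image_of_injective _ Sum.inl_injective,
      Set.ncard_image_of_injective _ Sum.inr_injective]
    rw [Set.disjoint_left]
    rintro x ⟨a, -, rfl⟩ ⟨b, -, hb⟩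
    exact Sum.inl_ne_inr hb.symm
  have hinter : (A ∩ B).Subsingleton := by
    intro u hu w hw
    by_contra hne
    by_cases hadj : G.Adj u w
    · refine hS (Sum.inl u) hu.1 (Sum.inl w) hw.1 (Sum.inr w) hw.2
        (by simp [hne]) (by simp) (by simp) ⟨cp_reachable _ _, ?_⟩
      have h1 : G.dist u w = 1 := SimpleGraph.dist_eq_one_iff_adj.mpr hadj
      rw [cp_dist_ll hG hne, cp_dist_lr_self, cp_dist_lr hne, h1]; norm_num
    · refine hS (Sum.inl u) hu.1 (Sum.inr u) hu.2 (Sum.inr w) hw.2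
        (by simp) (by simp [hne]) (by simp) ⟨cp_reachable _ _, ?_⟩
      have h1 : Gᶜ.dist u w = 1 := SimpleGraph.dist_eq_one_iff_adj.mpr
        ((SimpleGraph.compl_adj _ _ _).mpr ⟨hne, hadj⟩)
      rw [cp_dist_lr_self, cp_dist_rr hGc hne, cp_dist_lr hne, h1]; norm_num
  have h1 := Set.ncard_union_add_ncard_inter A B (Set.toFinite _) (Set.toFinite _)
  have h2 : (A ∪ B).ncard ≤ Fintype.card V := by
    have := Set.ncard_le_ncard (Set.subset_univ (A ∪ B)) (Set.toFinite _)
    rwa [Set.ncard_univ, Nat.card_eq_fintype_card] at this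
  have h3 : (A ∩ B).ncard ≤ 1 := (Set.ncard_le_one_iff (Set.toFinite _)).mpr
    fun ha hb => hinter ha hb
  have hABuniv : A ∪ B = Set.univ :=
    Set.eq_of_subset_of_ncard_le (Set.subset_univ _)
      (by rw [Set.ncard_univ, Nat.card_eq_fintype_card]; omega) (Set.toFinite _)
  have h5 : (A ∩ B).ncard = 1 := by
    have h6 : (A ∪ B).ncard = Fintype.card V := by
      rw [hABuniv, Set.ncard_univ, Nat.card_eq_fintype_card]
    omega
  obtain ⟨v, hv⟩ := Set.ncard_eq_one.mp h5
  have hvAB : v ∈ A ∩ B := by rw [hv]; exact Set.mem_singleton v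
  have hvA : v ∈ A := hvAB.1
  have hvB : v ∈ B := hvAB.2
  have hSl : ∀ a ∈ A, Sum.inl a ∈ S := fun a ha => ha
  have hSr : ∀ b ∈ B, Sum.inr b ∈ S := fun b hb => hb
  have memAB : ∀ u : V, u ∈ A ∨ u ∈ B := by
    intro u
    have : u ∈ A ∪ B := by rw [hABuniv]; trivial
    exact this
  have F1 : ∀ a ∈ A, a ≠ v → G.dist a v = 2 := by
    intro a ha hne
    have hd : 1 ≤ G.dist a v := hG.pos_dist_of_ne hne
    have hx1 : ¬ ((compPrism G).dist (Sum.inl a) (Sum.inl v) +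
        (compPrism G).dist (Sum.inl v) (Sum.inr v) =
        (compPrism G).dist (Sum.inl a) (Sum.inr v)) := fun he =>
      hS (Sum.inl a) (hSl a ha) (Sum.inl v) (hSl v hvA) (Sum.inr v) (hSr v hvB)
        (by simp [hne]) (by simp) (by simp) ⟨cp_reachable _ _, he⟩
    have hx2 : ¬ ((compPrism G).dist (Sum.inl a) (Sum.inr v) +
        (compPrism G).dist (Sum.inr v) (Sum.inl v) =
        (compPrism G).dist (Sum.inl a) (Sum.inl v)) := fun he =>
      hS (Sum.inl a) (hSl a ha) (Sum.inr v) (hSr v hvB) (Sum.inl v) (hSl v hvA)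
        (by simp) (by simp) (by simp [hne]) ⟨cp_reachable _ _, he⟩
    rw [cp_dist_ll hG hne, cp_dist_lr_self, cp_dist_lr hne] at hx1
    rw [cp_dist_lr hne, cp_dist_rl_self, cp_dist_ll hG hne] at hx2
    omega
  have F2 : ∀ b ∈ B, b ≠ v → Gᶜ.dist b v = 2 := by
    intro b hb hne
    have hd : 1 ≤ Gᶜ.dist b v := hGc.pos_dist_of_ne hne
    have hx1 : ¬ ((compPrism G).dist (Sum.inr b) (Sum.inr v) +
        (compPrism G).dist (Sum.inr v) (Sum.inl v) =
        (compPrism G).dist (Sum.inr b) (Sum.inl v)) := fun he =>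
      hS (Sum.inr b) (hSr b hb) (Sum.inr v) (hSr v hvB) (Sum.inl v) (hSl v hvA)
        (by simp [hne]) (by simp) (by simp) ⟨cp_reachable _ _, he⟩
    have hx2 : ¬ ((compPrism G).dist (Sum.inr b) (Sum.inl v) +
        (compPrism G).dist (Sum.inl v) (Sum.inr v) =
        (compPrism G).dist (Sum.inr b) (Sum.inr v)) := fun he =>
      hS (Sum.inr b) (hSr b hb) (Sum.inl v) (hSl v hvA) (Sum.inr v) (hSr v hvB)
        (by simp) (by simp) (by simp [hne]) ⟨cp_reachable _ _, he⟩
    rw [cp_dist_rr hGc hne, cp_dist_rl_self, cp_dist_rl hne] at hx1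
    rw [cp_dist_rl hne, cp_dist_lr_self, cp_dist_rr hGc hne] at hx2
    omega
  have F2' : ∀ b ∈ B, b ≠ v → G.Adj b v := by
    intro b hb hne
    have h2 := F2 b hb hne
    by_contra hnadj
    have hadj : Gᶜ.Adj b v := (SimpleGraph.compl_adj _ _ _).mpr ⟨hne, hnadj⟩
    have := SimpleGraph.dist_eq_one_iff_adj.mpr hadj
    omega
  have F3a : ∀ u, G.dist v u ≤ 2 := by
    intro u
    by_cases huv : u = v
    · subst huv; rw [SimpleGraph.dist_self]; omega
    · rcases memAB u with hu | hu
      · exact le_of_eq (by rw [SimpleGraph.dist_comm]; exact F1 u hu huv)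
      · have hadj := F2' u hu huv
        have : G.dist v u = 1 := SimpleGraph.dist_eq_one_iff_adj.mpr hadj.symm
        omega
  have F3b : ∃ u, G.dist v u = 2 := by
    obtain ⟨w, hwne, hwnadj⟩ := exists_not_adj hGc hn v
    have h0 : G.dist v w ≠ 0 := fun h => hwne (hG.dist_eq_zero_iff.mp h).symm
    have hh1 : G.dist v w ≠ 1 := fun h => hwnadj (SimpleGraph.dist_eq_one_iff_adj.mp h)
    exact ⟨w, by have := F3a w; omega⟩
  have hecc : ecc G v = 2 := by
    refine le_antisymm (ecc_le F3a) ?_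
    obtain ⟨u, hu⟩ := F3b
    exact hu ▸ le_ecc G v u
  have hrad : rad G = 2 := by
    have hle : rad G ≤ 2 := by
      unfold rad; rw [← hecc]; exact Nat.sInf_le ⟨v, rfl⟩
    have hge : 2 ≤ rad G := by
      unfold rad
      apply le_csInf (Set.range_nonempty _)
      rintro _ ⟨u, rfl⟩
      obtain ⟨w, hwne, hwnadj⟩ := exists_not_adj hGc hn u
      have h0 : G.dist u w ≠ 0 := fun h => hwne (hG.dist_eq_zero_iff.mp h).symm
      have hh1 : G.dist u w ≠ 1 := fun h => hwnadj (SimpleGraph.dist_eq_one_iff_adj.mp h)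
      have := le_ecc G u w
      omega
    omega
  have hNB : ∀ x, G.Adj v x → x ∈ B := by
    intro x hadj
    rcases memAB x with hx | hx
    · exfalso
      have hne : x ≠ v := fun h => G.loopless.irrefl v (h ▸ hadj)
      have hx2 := F1 x hx hne
      have hx1 : G.dist x v = 1 := SimpleGraph.dist_eq_one_iff_adj.mpr hadj.symm
      omega
    · exact hx
  have hN2A : ∀ u, G.dist u v = 2 → u ∈ A := by
    intro u hu
    rcases memAB u with h | h
    · exact h
    · exfalso
      have hne : u ≠ v := by
        intro he; rw [he, SimpleGraph.dist_self] at hu; omega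
      have hadj := F2' u h hne
      have hd1 : G.dist u v = 1 := SimpleGraph.dist_eq_one_iff_adj.mpr hadj
      omega
  have hGP3N2 : isGP3Set G {u : V | G.dist u v = 2} := by
    intro a ha b hb c hc hab hbc hac h
    obtain ⟨⟨hr, he⟩, hle⟩ := h
    have hp := hG.pos_dist_of_ne hab
    have hq := hG.pos_dist_of_ne hbc
    have hrr := hG.pos_dist_of_ne hac
    refine hS (Sum.inl a) (hSl a (hN2A a ha)) (Sum.inl b) (hSl b (hN2A b hb))
      (Sum.inl c) (hSl c (hN2A c hc)) (by simp [hab]) (by simp [hbc]) (by simp [hac])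
      ⟨cp_reachable _ _, ?_⟩
    rw [cp_dist_ll hG hab, cp_dist_ll hG hbc, cp_dist_ll hG hac]
    omega
  have hGP3N : isGP3Set Gᶜ (G.neighborSet v) := by
    intro a ha b hb c hc hab hbc hac h
    obtain ⟨⟨hr, he⟩, hle⟩ := h
    have hp := hGc.pos_dist_of_ne hab
    have hq := hGc.pos_dist_of_ne hbc
    have hrr := hGc.pos_dist_of_ne hac
    refine hS (Sum.inr a) (hSr a (hNB a ha)) (Sum.inr b) (hSr b (hNB b hb))
      (Sum.inr c) (hSr c (hNB c hc)) (by simp [hab]) (by simp [hbc]) (by simp [hac])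
      ⟨cp_reachable _ _, ?_⟩
    rw [cp_dist_rr hGc hab, cp_dist_rr hGc hbc, cp_dist_rr hGc hac]
    omega
  have hii : ∀ x ∈ G.neighborSet v, ∃ y ∈ {u : V | G.dist u v = 2}, ¬G.Adj x y := by
    intro x hx
    have hne : x ≠ v := fun h => G.loopless.irrefl v (h ▸ hx)
    have h2 := F2 x (hNB x hx) hne
    obtain ⟨hnadj, y, hy1, hy2⟩ := (dist_eq_two_iff' hne).mp h2
    have hyv : y ≠ v := fun h => Gᶜ.loopless.irrefl v (h ▸ hy2)
    have hynadj : ¬G.Adj y v := ((SimpleGraph.compl_adj _ _ _).mp hy2).2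
    have h0 : G.dist y v ≠ 0 := fun h => hyv (hG.dist_eq_zero_iff.mp h)
    have hd1 : G.dist y v ≠ 1 := fun h => hynadj (SimpleGraph.dist_eq_one_iff_adj.mp h)
    have hle2 : G.dist y v ≤ 2 := by rw [SimpleGraph.dist_comm]; exact F3a y
    refine ⟨y, ?_, fun h => ((SimpleGraph.compl_adj _ _ _).mp hy1).2 h⟩
    show G.dist y v = 2
    omega
  exact ⟨hrad, v, hecc, ⟨hGP3N, hGP3N2⟩, hii⟩

end CardHelpers

/-- For `G` with `n(G) ≥ 2` such that both `G` and `Gᶜ` are connected: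
`gp(G\bar{G}) = n(G) + 1` iff `rad(G) = 2` and there is a vertex `v` of
eccentricity `2` such that (i) `N_G(v)` is a `3`-general position set of `Gᶜ` and
`N_G²(v)` is a `3`-general position set of `G`, and (ii) every `x ∈ N_G(v)` has a
non-neighbour `y ∈ N_G²(v)`. -/
theorem gp_compPrism_eq_iff {V : Type*} [Fintype V] (G : SimpleGraph V)
    (hn : 2 ≤ Fintype.card V) (hG : G.Connected) (hGc : Gᶜ.Connected) :
    gpNum (compPrism G) = Fintype.card V + 1 ↔
      (rad G = 2 ∧ ∃ v : V, ecc G v = 2 ∧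
        (isGP3Set Gᶜ (G.neighborSet v) ∧ isGP3Set G {u : V | G.dist u v = 2}) ∧
        (∀ x ∈ G.neighborSet v, ∃ y ∈ {u : V | G.dist u v = 2}, ¬ G.Adj x y)) := by
  constructor
  · intro h
    exact forward_dir hn hG hGc h
  · rintro ⟨hrad, v, hecc, ⟨hNgp, hN2gp⟩, hii⟩
    exact backward_dir hG hGc hecc hNgp hN2gp hii
end

section
/- For every n ≥ 2, the complementary prism of the complete graph K_n satisfies gp(K_n\bar{K}_n) = n. -/
open SimpleGraph

variable {V : Type*}

section AuxGP

variable {n : ℕ}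

private lemma kp_adj_ll {a b : Fin n} :
    (compPrism (⊤ : SimpleGraph (Fin n))).Adj (Sum.inl a) (Sum.inl b) ↔ a ≠ b := by
  simp [compPrism]

private lemma kp_adj_lr {a b : Fin n} :
    (compPrism (⊤ : SimpleGraph (Fin n))).Adj (Sum.inl a) (Sum.inr b) ↔ a = b := Iff.rfl

private lemma kp_not_adj_rr {a b : Fin n} :
    ¬ (compPrism (⊤ : SimpleGraph (Fin n))).Adj (Sum.inr a) (Sum.inr b) := by
  simp [compPrism]

private lemma kp_dist_ll {a b : Fin n} (h : a ≠ b) :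
    (compPrism (⊤ : SimpleGraph (Fin n))).dist (Sum.inl a) (Sum.inl b) = 1 :=
  SimpleGraph.dist_eq_one_iff_adj.mpr (kp_adj_ll.mpr h)

private lemma kp_dist_match (a : Fin n) :
    (compPrism (⊤ : SimpleGraph (Fin n))).dist (Sum.inl a) (Sum.inr a) = 1 :=
  SimpleGraph.dist_eq_one_iff_adj.mpr (kp_adj_lr.mpr rfl)

/-- A walk of length 2 from `inl a` to `inr b` when `a ≠ b`. -/
private def kp_walk_lr {a b : Fin n} (h : a ≠ b) :
    (compPrism (⊤ : SimpleGraph (Fin n))).Walk (Sum.inl a) (Sum.inr b) :=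
  SimpleGraph.Walk.cons (kp_adj_ll.mpr h)
    (SimpleGraph.Walk.cons (kp_adj_lr.mpr rfl) SimpleGraph.Walk.nil)

private lemma kp_dist_lr {a b : Fin n} (h : a ≠ b) :
    (compPrism (⊤ : SimpleGraph (Fin n))).dist (Sum.inl a) (Sum.inr b) = 2 := by
  set G := compPrism (⊤ : SimpleGraph (Fin n)) with hG
  have hle : G.dist (Sum.inl a) (Sum.inr b) ≤ 2 := by
    have := G.dist_le (kp_walk_lr h)
    simpa [kp_walk_lr] using this
  have h0 : G.dist (Sum.inl a) (Sum.inr b) ≠ 0 := by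
    rw [SimpleGraph.dist_ne_zero_iff_ne_and_reachable]
    exact ⟨by simp, (kp_walk_lr h).reachable⟩
  have h1 : G.dist (Sum.inl a) (Sum.inr b) ≠ 1 := by
    intro h1
    rw [SimpleGraph.dist_eq_one_iff_adj, kp_adj_lr] at h1
    exact h h1
  omega

private lemma kp_dist_rr {a b : Fin n} (h : a ≠ b) :
    (compPrism (⊤ : SimpleGraph (Fin n))).dist (Sum.inr a) (Sum.inr b) = 3 := by
  set G := compPrism (⊤ : SimpleGraph (Fin n)) with hG
  have hle : G.dist (Sum.inr a) (Sum.inr b) ≤ 3 := by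
    have := G.dist_le (SimpleGraph.Walk.cons
      ((G.adj_comm _ _).mp (kp_adj_lr.mpr rfl)) (kp_walk_lr h))
    simpa [kp_walk_lr] using this
  have hr : G.Reachable (Sum.inr a) (Sum.inr b) :=
    (SimpleGraph.Walk.cons ((G.adj_comm _ _).mp (kp_adj_lr.mpr rfl))
      (kp_walk_lr h)).reachable
  obtain ⟨p, hp⟩ := hr.exists_walk_length_eq_dist
  have hge : 3 ≤ p.length := by
    cases p with
    | nil => exact absurd rfl h
    | cons hadj q =>
      rename_i x
      cases x with
      | inr c => exact absurd hadj kp_not_adj_rr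
      | inl c =>
        have hac : a = c := hadj
        subst hac
        have h2 : 2 ≤ q.length := by
          have hd := G.dist_le q
          rw [kp_dist_lr h] at hd
          omega
        simp only [SimpleGraph.Walk.length_cons]
        omega
  omega

end AuxGP
/-- For `n ≥ 2`, the complementary prism of the complete graph satisfies
`gp(K_n \bar{K_n}) = n`. -/
theorem gp_compPrism_completeGraph (n : ℕ) (hn : 2 ≤ n) :
    gpNum (compPrism (⊤ : SimpleGraph (Fin n))) = n := by
  set G := compPrism (⊤ : SimpleGraph (Fin n)) with hG
  -- Upper bound: any general position set has at most n vertices.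
  have upper : ∀ S : Set (Fin n ⊕ Fin n), isGenPosSet G S → S.ncard ≤ n := by
    intro S hS
    by_contra hlt
    push_neg at hlt
    -- the index map is not injective on S
    have hninj : ¬ Set.InjOn (Sum.elim id id) S := by
      intro hinj
      have h1 : ((Sum.elim id id : Fin n ⊕ Fin n → Fin n) '' S).ncard = S.ncard :=
        Set.ncard_image_of_injOn hinj
      have h2 : ((Sum.elim id id : Fin n ⊕ Fin n → Fin n) '' S).ncard ≤ n := by
        have := Set.ncard_le_ncard (Set.subset_univ
          ((Sum.elim id id : Fin n ⊕ Fin n → Fin n) '' S)) Set.finite_univ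
        simpa [Set.ncard_univ] using this
      omega
    rw [Set.InjOn] at hninj
    push_neg at hninj
    obtain ⟨x, hx, y, hy, hxy, hne⟩ := hninj
    -- x and y have the same index but are distinct: one is inl a, the other inr a
    obtain ⟨a, hxa, hya⟩ : ∃ a : Fin n,
        (Sum.inl a ∈ S) ∧ (Sum.inr a ∈ S) := by
      cases x with
      | inl a =>
        cases y with
        | inl b => simp at hxy; exact absurd (by rw [hxy]) hne
        | inr b => simp at hxy; subst hxy; exact ⟨a, hx, hy⟩
      | inr a =>
        cases y with
        | inl b => simp at hxy; subst hxy; exact ⟨a, hy, hx⟩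
        | inr b => simp at hxy; exact absurd (by rw [hxy]) hne
    -- find a third element of S
    have hSne : ¬ S ⊆ {Sum.inl a, Sum.inr a} := by
      intro hsub
      have := Set.ncard_le_ncard hsub (by
        exact (Set.finite_singleton _).insert _)
      have h2 : ({Sum.inl a, Sum.inr a} : Set (Fin n ⊕ Fin n)).ncard ≤ 2 := by
        apply le_trans (Set.ncard_insert_le _ _)
        simp
      omega
    obtain ⟨z, hz, hznot⟩ := Set.not_subset.mp hSne
    simp only [Set.mem_insert_iff, Set.mem_singleton_iff, not_or] at hznot
    obtain ⟨hz1, hz2⟩ := hznot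
    cases z with
    | inl b =>
      have hba : b ≠ a := fun hba => hz1 (by rw [hba])
      -- inl a lies on a geodesic from inr a to inl b
      refine hS (Sum.inr a) hya (Sum.inl a) hxa (Sum.inl b) hz
        (by simp) (by simp [Ne.symm hba]) (by simp) ?_
      constructor
      · exact (SimpleGraph.Walk.cons ((G.adj_comm _ _).mp (kp_adj_lr.mpr rfl))
          (SimpleGraph.Walk.cons (kp_adj_ll.mpr (Ne.symm hba))
            SimpleGraph.Walk.nil)).reachable
      · rw [SimpleGraph.dist_comm (u := (Sum.inr a : Fin n ⊕ Fin n)),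
          kp_dist_match, kp_dist_ll (Ne.symm hba),
          SimpleGraph.dist_comm (u := (Sum.inr a : Fin n ⊕ Fin n)),
          kp_dist_lr hba]
    | inr b =>
      have hba : b ≠ a := fun hba => hz2 (by rw [hba])
      -- inl a lies on a geodesic from inr b to inr a
      refine hS (Sum.inr b) hz (Sum.inl a) hxa (Sum.inr a) hya
        (by simp [hba]) (by simp) (by simp [hba]) ?_
      constructor
      · refine SimpleGraph.Walk.reachable ?_
        exact SimpleGraph.Walk.cons ((G.adj_comm _ _).mp (kp_adj_lr.mpr rfl))
          (kp_walk_lr hba)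
      · rw [SimpleGraph.dist_comm (u := (Sum.inr b : Fin n ⊕ Fin n)) (v := Sum.inl a),
          kp_dist_lr hba.symm, kp_dist_match, kp_dist_rr hba]
  -- Lower bound witness: the left copy.
  have hS0 : isGenPosSet G (Sum.inl '' (Set.univ : Set (Fin n))) := by
    rintro u ⟨a, -, rfl⟩ v ⟨b, -, rfl⟩ w ⟨c, -, rfl⟩ huv hvw huw ⟨-, hdist⟩
    have hab : a ≠ b := fun h => huv (by rw [h])
    have hbc : b ≠ c := fun h => hvw (by rw [h])
    have hac : a ≠ c := fun h => huw (by rw [h])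
    rw [kp_dist_ll hab, kp_dist_ll hbc, kp_dist_ll hac] at hdist
    omega
  have hS0card : (Sum.inl '' (Set.univ : Set (Fin n)) : Set (Fin n ⊕ Fin n)).ncard = n := by
    rw [Set.ncard_image_of_injective _ Sum.inl_injective, Set.ncard_univ]
    simp
  have hmem : n ∈ {m : ℕ | ∃ S : Set (Fin n ⊕ Fin n), isGenPosSet G S ∧ S.ncard = m} :=
    ⟨_, hS0, hS0card⟩
  have hbdd : ∀ m ∈ {m : ℕ | ∃ S : Set (Fin n ⊕ Fin n), isGenPosSet G S ∧ S.ncard = m},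
      m ≤ n := by
    rintro m ⟨S, hS, rfl⟩
    exact upper S hS
  exact le_antisymm (csSup_le ⟨n, hmem⟩ hbdd) (le_csSup ⟨n, hbdd⟩ hmem)
end
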